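/- arXiv:1606.08134 — 6 statements merged into one kernel-verified Lean document; each statement's English description precedes it below -/
import Mathlib

section
/- The function f(z) = z + conj(z^n)/(αn² + n(1-α)) belongs to W⁰_H(α), and its n-th co-analytic coefficient equals 1/(αn² + n(1-α)); hence the coefficient bound |b_n| ≤ 1/(αn² + n(1-α)) for W⁰_H(α) is sharp. -/
/-- sharpness of the bound |b_n| ≤ 1/(αn² + n(1-α)):
the function f(z) = z + conj(z^n)/(αn² + n(1-α)) belongs to W⁰_H(α) and its
n-th co-analytic coefficient has modulus exactly 1/(αn² + n(1-α)). -/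
theorem stmt_4 (α : ℝ) (hα : 0 ≤ α) (n : ℕ) (hn : 2 ≤ n) :
    (∀ z ∈ Metric.ball (0 : ℂ) 1,
        ‖(deriv (fun w : ℂ => w ^ n / ((α : ℂ) * (n : ℂ) ^ 2 + (n : ℂ) * (1 - (α : ℂ)))) z
              + (α : ℂ) * z *
                deriv (deriv (fun w : ℂ => w ^ n / ((α : ℂ) * (n : ℂ) ^ 2 + (n : ℂ) * (1 - (α : ℂ))))) z)‖
          < (deriv (fun w : ℂ => w) z + (α : ℂ) * z * deriv (deriv (fun w : ℂ => w)) z).re)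
      ∧ ‖(1 / ((α : ℂ) * (n : ℂ) ^ 2 + (n : ℂ) * (1 - (α : ℂ))))‖
          = 1 / (α * (n : ℝ) ^ 2 + (n : ℝ) * (1 - α)) := by
  have hn1 : (1:ℝ) ≤ (n:ℝ) - 1 := by
    have : (2:ℝ) ≤ (n:ℝ) := by exact_mod_cast hn
    linarith
  have hcpos : 0 < α * (n : ℝ) ^ 2 + (n : ℝ) * (1 - α) := by
    have h2 : (2:ℝ) ≤ (n:ℝ) := by exact_mod_cast hn
    nlinarith [mul_nonneg hα (by nlinarith : (0:ℝ) ≤ (n:ℝ)^2 - (n:ℝ))]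
  set C : ℂ := (α : ℂ) * (n : ℂ) ^ 2 + (n : ℂ) * (1 - (α : ℂ)) with hCdef
  have hCr : C = ((α * (n : ℝ) ^ 2 + (n : ℝ) * (1 - α) : ℝ) : ℂ) := by
    push_cast; ring
  have hC0 : C ≠ 0 := by
    rw [hCr]
    exact_mod_cast hcpos.ne'
  -- first derivative
  have hd1 : deriv (fun w : ℂ => w ^ n / C) = fun z => (n : ℂ) * z ^ (n - 1) / C := by
    funext z
    rw [deriv_div_const, deriv_pow_field]
  have hd2 : ∀ z : ℂ, deriv (fun z : ℂ => (n : ℂ) * z ^ (n - 1) / C) z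
      = (n : ℂ) * (((n:ℂ) - 1) * z ^ (n - 2)) / C := by
    intro z
    rw [deriv_div_const, deriv_const_mul _ (differentiable_pow (n-1)).differentiableAt,
      deriv_pow_field]
    have hcast : ((n - 1 : ℕ) : ℂ) = (n : ℂ) - 1 := by
      have : 1 ≤ n := by omega
      push_cast [this]; ring
    have hsub : n - 1 - 1 = n - 2 := by omega
    rw [hcast, hsub]
  constructor
  · intro z hz
    rw [hd1]
    simp only [hd2]
    have hzpow : z * z ^ (n - 2) = z ^ (n - 1) := by
      rw [← pow_succ']
      congr 1
      omega
    have hkey : (n : ℂ) * z ^ (n - 1) / C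
        + (α : ℂ) * z * ((n : ℂ) * (((n:ℂ) - 1) * z ^ (n - 2)) / C) = z ^ (n - 1) := by
      have hCval : C = (n : ℂ) + (α : ℂ) * ((n:ℂ) * ((n:ℂ) - 1)) := by
        rw [hCdef]; ring
      rw [mul_div_assoc', ← add_div, div_eq_iff hC0]
      rw [hCval]
      calc (n:ℂ) * z ^ (n-1) + (α:ℂ) * z * ((n:ℂ) * (((n:ℂ)-1) * z ^ (n-2)))
          = (n:ℂ) * z ^ (n-1) + (α:ℂ) * ((n:ℂ) * ((n:ℂ)-1)) * (z * z ^ (n-2)) := by ring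
        _ = z ^ (n-1) * ((n:ℂ) + (α:ℂ) * ((n:ℂ) * ((n:ℂ)-1))) := by rw [hzpow]; ring
    rw [hkey]
    have hid : deriv (fun w : ℂ => w) = fun _ => (1:ℂ) := by
      funext w; exact deriv_id w
    rw [hid]
    simp only [deriv_const, mul_zero, add_zero, Complex.one_re]
    rw [norm_pow]
    have hz1 : ‖z‖ < 1 := by
      simpa [Complex.dist_eq] using hz
    exact pow_lt_one₀ (norm_nonneg z) hz1 (by omega)
  · rw [hCr, norm_div, norm_one, Complex.norm_real, Real.norm_eq_abs, abs_of_pos hcpos]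
end

section
/- Let f = h + conj(g) with h(z) = z + Σ_{n≥2} a_n z^n and g(z) = Σ_{n≥2} b_n z^n analytic on the unit disk. If Σ_{n≥2} (αn² + (1−α)n)(|a_n| + |b_n|) < 1, then f ∈ W⁰_H(α), i.e., Re(h'(z) + αz h''(z)) > |g'(z) + αz g''(z)| for all z in the unit disk. -/
private lemma summable_mono (c : ℕ → ℂ) (r : ℕ → ℝ) (hbound : ∀ n, ‖c n‖ ≤ r n)
    (hr : Summable r) {z : ℂ} (hz : ‖z‖ ≤ 1) (k : ℕ) :
    Summable fun n : ℕ => c n * z ^ (n + k) := by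
  apply Summable.of_norm
  apply Summable.of_nonneg_of_le (fun n => norm_nonneg _) _ hr
  intro n
  rw [norm_mul, norm_pow]
  calc ‖c n‖ * ‖z‖ ^ (n + k) ≤ r n * 1 :=
        mul_le_mul (hbound n) (pow_le_one₀ (norm_nonneg _) hz) (by positivity)
          (le_trans (norm_nonneg _) (hbound n))
    _ = r n := mul_one _

private lemma coeff_norm (w : ℂ) (n : ℕ) : ‖((n : ℂ) + 1) * w‖ = ((n : ℝ) + 1) * ‖w‖ := by
  rw [norm_mul]
  congr 1
  rw [show ((n : ℂ) + 1) = (((n : ℝ) + 1 : ℝ) : ℂ) by push_cast; ring, Complex.norm_real,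
    Real.norm_of_nonneg (by positivity)]

private lemma tsum_pow_hasDerivAt (a : ℕ → ℂ)
    (hS : Summable fun n : ℕ => (n : ℝ) * ‖a n‖) {z : ℂ} (hz : ‖z‖ < 1) :
    HasDerivAt (fun y : ℂ => ∑' n, a n * y ^ n)
      (∑' n : ℕ, (((n : ℂ) + 1) * a (n + 1)) * z ^ n) z := by
  have hball : z ∈ Metric.ball (0 : ℂ) 1 := by simpa [mem_ball_zero_iff] using hz
  have hder : ∀ (n : ℕ) (y : ℂ), y ∈ Metric.ball (0:ℂ) 1 →
      HasDerivAt (fun y : ℂ => a n * y ^ n) ((n : ℂ) * a n * y ^ (n - 1)) y := by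
    intro n y _
    have := (hasDerivAt_pow n y).const_mul (a n)
    exact this.congr_deriv (by ring)
  have hbound : ∀ (n : ℕ) (y : ℂ), y ∈ Metric.ball (0:ℂ) 1 →
      ‖(n : ℂ) * a n * y ^ (n - 1)‖ ≤ (n : ℝ) * ‖a n‖ := by
    intro n y hy
    rw [mem_ball_zero_iff] at hy
    calc ‖(n : ℂ) * a n * y ^ (n - 1)‖ = (n : ℝ) * ‖a n‖ * ‖y‖ ^ (n-1) := by
          simp [norm_mul, norm_pow, mul_assoc]
      _ ≤ (n:ℝ) * ‖a n‖ * 1 :=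
          mul_le_mul_of_nonneg_left (pow_le_one₀ (norm_nonneg _) hy.le) (by positivity)
      _ = _ := mul_one _
  have h0 : Summable fun n => a n * (0:ℂ) ^ n := by
    apply summable_of_ne_finset_zero (s := {0})
    intro n hn
    simp at hn
    simp [zero_pow hn]
  have key := hasDerivAt_tsum_of_isPreconnected hS Metric.isOpen_ball
      (convex_ball (0:ℂ) 1).isPreconnected hder hbound (Metric.mem_ball_self one_pos) h0 hball
  refine key.congr_deriv ?_
  have hsum' : Summable fun n : ℕ => (n : ℂ) * a n * z ^ (n - 1) := by
    apply Summable.of_norm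
    apply Summable.of_nonneg_of_le (fun n => norm_nonneg _) (fun n => hbound n z hball) hS
  rw [Summable.tsum_eq_zero_add hsum']
  simp only [Nat.cast_zero, zero_mul, zero_add, Nat.add_sub_cancel]
  apply tsum_congr; intro n; push_cast; ring
private lemma rep_deriv (α : ℝ) (a : ℕ → ℂ) (h : ℂ → ℂ)
    (hrep : ∀ z ∈ Metric.ball (0 : ℂ) 1, HasSum (fun n => a n * z ^ n) (h z))
    (hS1 : Summable fun n : ℕ => (n : ℝ) * ‖a n‖)
    (hS2 : α ≠ 0 → Summable fun n : ℕ => (n : ℝ) * ((n : ℝ) + 1) * ‖a (n + 1)‖)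
    {z : ℂ} (hz : z ∈ Metric.ball (0 : ℂ) 1) :
    deriv h z + (α : ℂ) * z * deriv (deriv h) z
      = a 1 + ∑' n : ℕ, ((α * ((n : ℝ) + 2) ^ 2 + (1 - α) * ((n : ℝ) + 2) : ℝ) : ℂ)
          * a (n + 2) * z ^ (n + 1) := by
  have hz' : ‖z‖ < 1 := mem_ball_zero_iff.mp hz
  -- shifted summability
  have hS1' : Summable fun n : ℕ => ((n : ℝ) + 1) * ‖a (n + 1)‖ := by
    have := (summable_nat_add_iff 1).mpr hS1
    apply this.congr
    intro n; push_cast; ring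
  have hS1'' : Summable fun n : ℕ => ((n : ℝ) + 2) * ‖a (n + 2)‖ := by
    have := (summable_nat_add_iff 2).mpr hS1
    apply this.congr
    intro n; push_cast; ring
  -- h equals the power series on the ball
  have heq : Set.EqOn h (fun y : ℂ => ∑' n : ℕ, a n * y ^ n) (Metric.ball (0:ℂ) 1) := by
    intro y hy
    exact ((hrep y hy).tsum_eq).symm
  -- first derivative
  have hd : ∀ y ∈ Metric.ball (0:ℂ) 1,
      HasDerivAt h (∑' n : ℕ, (((n : ℂ) + 1) * a (n + 1)) * y ^ n) y := by
    intro y hy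
    exact (tsum_pow_hasDerivAt a hS1 (mem_ball_zero_iff.mp hy)).congr_of_eventuallyEq
      (Filter.eventuallyEq_of_mem (Metric.isOpen_ball.mem_nhds hy) heq)
  have hderiv1 : ∀ y ∈ Metric.ball (0:ℂ) 1,
      deriv h y = ∑' n : ℕ, (((n : ℂ) + 1) * a (n + 1)) * y ^ n := fun y hy => (hd y hy).deriv
  -- split off the n = 0 term of the first derivative
  have hVsum : Summable fun n : ℕ => (((n : ℂ) + 1) * a (n + 1)) * z ^ n := by
    have := summable_mono (fun n => ((n : ℂ) + 1) * a (n + 1)) (fun n => ((n : ℝ) + 1) * ‖a (n + 1)‖)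
      (fun n => le_of_eq (coeff_norm _ n)) hS1' hz'.le 0
    simpa using this
  have hVsplit : (∑' n : ℕ, (((n : ℂ) + 1) * a (n + 1)) * z ^ n)
      = a 1 + ∑' n : ℕ, (((n : ℂ) + 2) * a (n + 2)) * z ^ (n + 1) := by
    rw [Summable.tsum_eq_zero_add hVsum]
    congr 1
    · simp
    · apply tsum_congr; intro n; push_cast; ring_nf
  rcases eq_or_ne α 0 with hα0 | hα0
  · subst hα0
    rw [Complex.ofReal_zero, zero_mul, zero_mul, add_zero, hderiv1 z hz, hVsplit]
    congr 1
    apply tsum_congr; intro n; push_cast; ring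
  · -- second derivative
    have hS2' := hS2 hα0
    have hS2'' : Summable fun n : ℕ => (n : ℝ) * ‖((n : ℂ) + 1) * a (n + 1)‖ := by
      apply hS2'.congr
      intro n; rw [coeff_norm]; ring
    have hd2 : HasDerivAt (fun y : ℂ => ∑' n : ℕ, (((n : ℂ) + 1) * a (n + 1)) * y ^ n)
        (∑' n : ℕ, (((n : ℂ) + 1) * (((n + 1 : ℕ) : ℂ) + 1) * a (n + 2)) * z ^ n) z := by
      have := tsum_pow_hasDerivAt (fun n => ((n : ℂ) + 1) * a (n + 1)) hS2'' hz'
      convert this using 1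
      apply tsum_congr; intro n; push_cast; ring
    have hd2' : HasDerivAt (deriv h)
        (∑' n : ℕ, (((n : ℂ) + 1) * (((n + 1 : ℕ) : ℂ) + 1) * a (n + 2)) * z ^ n) z := by
      apply hd2.congr_of_eventuallyEq
      exact Filter.eventuallyEq_of_mem (Metric.isOpen_ball.mem_nhds hz) hderiv1
    rw [hderiv1 z hz, hd2'.deriv, hVsplit, ← tsum_mul_left, add_assoc]
    congr 1
    have hsumA : Summable fun n : ℕ => (((n : ℂ) + 2) * a (n + 2)) * z ^ (n + 1) :=
      summable_mono _ (fun n => ((n : ℝ) + 2) * ‖a (n + 2)‖)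
        (fun n => by
          have := coeff_norm (a (n + 2)) (n + 1)
          push_cast at this ⊢
          rw [show ((n : ℂ) + 2) = ((n : ℂ) + 1 + 1) by ring, this]
          push_cast; ring_nf; exact le_refl _) hS1'' hz'.le 1
    have hS2shift : Summable fun n : ℕ => ((n : ℝ) + 1) * ((n : ℝ) + 2) * ‖a (n + 2)‖ := by
      have := (summable_nat_add_iff 1).mpr hS2'
      apply this.congr
      intro n; push_cast; ring
    have hsumB0 : Summable fun n : ℕ =>
        ((((n : ℂ) + 1) * (((n + 1 : ℕ) : ℂ) + 1) * a (n + 2)) * z ^ n) := by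
      have := summable_mono (fun n : ℕ => ((n : ℂ) + 1) * (((n + 1 : ℕ) : ℂ) + 1) * a (n + 2))
        (fun n => ((n : ℝ) + 1) * ((n : ℝ) + 2) * ‖a (n + 2)‖) ?_ hS2shift hz'.le 0
      · simpa using this
      · intro n
        rw [norm_mul, norm_mul]
        have h1 : ‖((n : ℂ) + 1)‖ = ((n : ℝ) + 1) := by
          rw [show ((n : ℂ) + 1) = (((n : ℝ) + 1 : ℝ) : ℂ) by push_cast; ring,
            Complex.norm_real, Real.norm_of_nonneg (by positivity)]
        have h2 : ‖(((n + 1 : ℕ) : ℂ) + 1)‖ = ((n : ℝ) + 2) := by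
          rw [show (((n + 1 : ℕ) : ℂ) + 1) = (((n : ℝ) + 2 : ℝ) : ℂ) by push_cast; ring,
            Complex.norm_real, Real.norm_of_nonneg (by positivity)]
        rw [h1, h2]
    have hsumB : Summable fun n : ℕ =>
        (α : ℂ) * z * ((((n : ℂ) + 1) * (((n + 1 : ℕ) : ℂ) + 1) * a (n + 2)) * z ^ n) :=
      hsumB0.mul_left _
    rw [← Summable.tsum_add (by simpa using hsumA) (by simpa using hsumB)]
    apply tsum_congr; intro n
    push_cast
    ring
/-- coefficient sufficient condition for membership in W⁰_H(α). -/
theorem stmt_6 (α : ℝ) (hα : 0 ≤ α) (a b : ℕ → ℂ) (h g : ℂ → ℂ)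
    (ha0 : a 0 = 0) (ha1 : a 1 = 1) (hb0 : b 0 = 0) (hb1 : b 1 = 0)
    (hrep : ∀ z ∈ Metric.ball (0 : ℂ) 1, HasSum (fun n => a n * z ^ n) (h z))
    (grep : ∀ z ∈ Metric.ball (0 : ℂ) 1, HasSum (fun n => b n * z ^ n) (g z))
    (hsum : Summable (fun m : ℕ =>
        (α * ((m : ℝ) + 2) ^ 2 + (1 - α) * ((m : ℝ) + 2))
          * (‖a (m + 2)‖ + ‖b (m + 2)‖)))
    (hlt : ∑' m : ℕ,
        (α * ((m : ℝ) + 2) ^ 2 + (1 - α) * ((m : ℝ) + 2))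
          * (‖a (m + 2)‖ + ‖b (m + 2)‖) < 1) :
    ∀ z ∈ Metric.ball (0 : ℂ) 1,
      ‖deriv g z + (α : ℂ) * z * deriv (deriv g) z‖
        < (deriv h z + (α : ℂ) * z * deriv (deriv h) z).re := by
  intro z hz
  have hz' : ‖z‖ < 1 := mem_ball_zero_iff.mp hz
  -- facts about the coefficient C m = α (m+2)² + (1-α)(m+2)
  have hC0 : ∀ m : ℕ, 0 ≤ α * ((m : ℝ) + 2) ^ 2 + (1 - α) * ((m : ℝ) + 2) := by
    intro m
    have hm : (0 : ℝ) ≤ (m : ℝ) := Nat.cast_nonneg m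
    nlinarith [mul_nonneg hα (mul_nonneg (by linarith : (0:ℝ) ≤ (m:ℝ)+2) (by linarith : (0:ℝ) ≤ (m:ℝ)+1))]
  have hCge : ∀ m : ℕ, (m : ℝ) + 2 ≤ α * ((m : ℝ) + 2) ^ 2 + (1 - α) * ((m : ℝ) + 2) := by
    intro m
    have hm : (0 : ℝ) ≤ (m : ℝ) := Nat.cast_nonneg m
    nlinarith [mul_nonneg hα (mul_nonneg (by linarith : (0:ℝ) ≤ (m:ℝ)+2) (by linarith : (0:ℝ) ≤ (m:ℝ)+1))]
  have hCge2 : ∀ m : ℕ, α * (((m : ℝ) + 1) * ((m : ℝ) + 2))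
      ≤ α * ((m : ℝ) + 2) ^ 2 + (1 - α) * ((m : ℝ) + 2) := by
    intro m
    have hm : (0 : ℝ) ≤ (m : ℝ) := Nat.cast_nonneg m
    nlinarith
  -- summability of the separate coefficient series
  have hsa : Summable fun m : ℕ =>
      (α * ((m : ℝ) + 2) ^ 2 + (1 - α) * ((m : ℝ) + 2)) * ‖a (m + 2)‖ := by
    apply Summable.of_nonneg_of_le (fun m => mul_nonneg (hC0 m) (norm_nonneg _)) _ hsum
    intro m
    exact mul_le_mul_of_nonneg_left (le_add_of_nonneg_right (norm_nonneg _)) (hC0 m)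
  have hsb : Summable fun m : ℕ =>
      (α * ((m : ℝ) + 2) ^ 2 + (1 - α) * ((m : ℝ) + 2)) * ‖b (m + 2)‖ := by
    apply Summable.of_nonneg_of_le (fun m => mul_nonneg (hC0 m) (norm_nonneg _)) _ hsum
    intro m
    exact mul_le_mul_of_nonneg_left (le_add_of_nonneg_left (norm_nonneg _)) (hC0 m)
  -- derived summability hypotheses for rep_deriv
  have mkS1 : ∀ (c : ℕ → ℂ), (Summable fun m : ℕ =>
      (α * ((m : ℝ) + 2) ^ 2 + (1 - α) * ((m : ℝ) + 2)) * ‖c (m + 2)‖) →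
      Summable fun n : ℕ => (n : ℝ) * ‖c n‖ := by
    intro c hsc
    rw [← summable_nat_add_iff 2]
    apply Summable.of_nonneg_of_le (fun n => by positivity) _ hsc
    intro n
    push_cast
    exact mul_le_mul_of_nonneg_right (hCge n) (norm_nonneg _)
  have mkS2 : ∀ (c : ℕ → ℂ), (Summable fun m : ℕ =>
      (α * ((m : ℝ) + 2) ^ 2 + (1 - α) * ((m : ℝ) + 2)) * ‖c (m + 2)‖) →
      α ≠ 0 → Summable fun n : ℕ => (n : ℝ) * ((n : ℝ) + 1) * ‖c (n + 1)‖ := by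
    intro c hsc hα0
    have hαpos : 0 < α := lt_of_le_of_ne hα (Ne.symm hα0)
    rw [← summable_nat_add_iff 1]
    apply Summable.of_nonneg_of_le (fun n => by positivity) _ (hsc.mul_left α⁻¹)
    intro n
    push_cast
    rw [← mul_assoc, inv_mul_eq_div]
    rw [show ((n:ℝ) + 1) * ((n:ℝ) + 1 + 1) * ‖c (n + 1 + 1)‖
        = (((n:ℝ) + 1) * ((n:ℝ) + 2)) * ‖c (n + 2)‖ by ring]
    apply mul_le_mul_of_nonneg_right _ (norm_nonneg _)
    rw [le_div_iff₀ hαpos]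
    nlinarith [hCge2 n]
  -- the two representations
  have Ha := rep_deriv α a h hrep (mkS1 a hsa) (mkS2 a hsa) hz
  have Hb := rep_deriv α b g grep (mkS1 b hsb) (mkS2 b hsb) hz
  rw [Ha, Hb, ha1, hb1, zero_add]
  -- bounds on the series
  have normcoef : ∀ (c : ℕ → ℂ) (n : ℕ),
      ‖((α * ((n : ℝ) + 2) ^ 2 + (1 - α) * ((n : ℝ) + 2) : ℝ) : ℂ) * c (n + 2) * z ^ (n + 1)‖
        ≤ (α * ((n : ℝ) + 2) ^ 2 + (1 - α) * ((n : ℝ) + 2)) * ‖c (n + 2)‖ := by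
    intro c n
    rw [norm_mul, norm_mul, Complex.norm_real, Real.norm_of_nonneg (hC0 n), norm_pow, mul_assoc]
    apply mul_le_mul_of_nonneg_left _ (hC0 n)
    calc ‖c (n+2)‖ * ‖z‖ ^ (n+1) ≤ ‖c (n+2)‖ * 1 :=
          mul_le_mul_of_nonneg_left (pow_le_one₀ (norm_nonneg _) hz'.le) (norm_nonneg _)
      _ = ‖c (n+2)‖ := mul_one _
  have sumterm : ∀ (c : ℕ → ℂ), (Summable fun m : ℕ =>
      (α * ((m : ℝ) + 2) ^ 2 + (1 - α) * ((m : ℝ) + 2)) * ‖c (m + 2)‖) →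
      Summable fun n : ℕ =>
        ‖((α * ((n : ℝ) + 2) ^ 2 + (1 - α) * ((n : ℝ) + 2) : ℝ) : ℂ) * c (n + 2) * z ^ (n + 1)‖ :=
    fun c hsc => Summable.of_nonneg_of_le (fun n => norm_nonneg _) (fun n => normcoef c n) hsc
  have hTa : ‖∑' n : ℕ, ((α * ((n : ℝ) + 2) ^ 2 + (1 - α) * ((n : ℝ) + 2) : ℝ) : ℂ)
        * a (n + 2) * z ^ (n + 1)‖
      ≤ ∑' n : ℕ, (α * ((n : ℝ) + 2) ^ 2 + (1 - α) * ((n : ℝ) + 2)) * ‖a (n + 2)‖ :=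
    le_trans (norm_tsum_le_tsum_norm (sumterm a hsa))
      (Summable.tsum_le_tsum (fun n => normcoef a n) (sumterm a hsa) hsa)
  have hTb : ‖∑' n : ℕ, ((α * ((n : ℝ) + 2) ^ 2 + (1 - α) * ((n : ℝ) + 2) : ℝ) : ℂ)
        * b (n + 2) * z ^ (n + 1)‖
      ≤ ∑' n : ℕ, (α * ((n : ℝ) + 2) ^ 2 + (1 - α) * ((n : ℝ) + 2)) * ‖b (n + 2)‖ :=
    le_trans (norm_tsum_le_tsum_norm (sumterm b hsb))
      (Summable.tsum_le_tsum (fun n => normcoef b n) (sumterm b hsb) hsb)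
  -- the sum of the two series bounds is < 1
  have hsplit : (∑' n : ℕ, (α * ((n : ℝ) + 2) ^ 2 + (1 - α) * ((n : ℝ) + 2)) * ‖a (n + 2)‖)
      + (∑' n : ℕ, (α * ((n : ℝ) + 2) ^ 2 + (1 - α) * ((n : ℝ) + 2)) * ‖b (n + 2)‖) < 1 := by
    rw [← Summable.tsum_add hsa hsb]
    calc (∑' n : ℕ, ((α * ((n : ℝ) + 2) ^ 2 + (1 - α) * ((n : ℝ) + 2)) * ‖a (n + 2)‖
          + (α * ((n : ℝ) + 2) ^ 2 + (1 - α) * ((n : ℝ) + 2)) * ‖b (n + 2)‖))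
        = ∑' m : ℕ, (α * ((m : ℝ) + 2) ^ 2 + (1 - α) * ((m : ℝ) + 2)) * (‖a (m + 2)‖ + ‖b (m + 2)‖) :=
          tsum_congr fun n => by ring
      _ < 1 := hlt
  -- conclude
  have hre := Complex.abs_re_le_norm (∑' n : ℕ,
    ((α * ((n : ℝ) + 2) ^ 2 + (1 - α) * ((n : ℝ) + 2) : ℝ) : ℂ) * a (n + 2) * z ^ (n + 1))
  have hre' := neg_abs_le ((∑' n : ℕ,
    ((α * ((n : ℝ) + 2) ^ 2 + (1 - α) * ((n : ℝ) + 2) : ℝ) : ℂ) * a (n + 2) * z ^ (n + 1)).re)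
  simp only [Complex.add_re, Complex.one_re]
  linarith
end

section
/- If f = h + conj(g) ∈ W⁰_H(α) with α ≥ 0, then for every ε with |ε| = 1 and every z with |z| < 1/2, Re((s₃(h) + ε s₃(g))'(z) + αz (s₃(h) + ε s₃(g))''(z)) > 1/4, where s₃ denotes the third partial sum of the Taylor series. -/
open Metric Complex Set




lemma hasFPSOB_of_hasSum (a : ℕ → ℂ) (h : ℂ → ℂ)
    (hrep : ∀ z ∈ Metric.ball (0 : ℂ) 1, HasSum (fun n => a n * z ^ n) (h z)) :
    HasFPowerSeriesOnBall h (FormalMultilinearSeries.ofScalars ℂ a) 0 1 := by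
  constructor
  · -- radius
    apply ENNReal.le_of_forall_nnreal_lt
    intro r hr
    have hr1 : (r : ℝ) < 1 := by exact_mod_cast hr
    have hz : ((r : ℝ) : ℂ) ∈ Metric.ball (0 : ℂ) 1 := by
      simp [_root_.abs_of_nonneg r.coe_nonneg, hr1]
    have hs := (hrep _ hz).summable
    have ht : Filter.Tendsto (fun n => a n * ((r : ℝ) : ℂ) ^ n) Filter.atTop (nhds 0) :=
      hs.tendsto_atTop_zero
    apply FormalMultilinearSeries.le_radius_of_isBigO
    have : (fun n => ‖a n‖ * (r : ℝ) ^ n) = fun n => ‖a n * ((r : ℝ) : ℂ) ^ n‖ := by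
      funext n
      simp [_root_.abs_of_nonneg r.coe_nonneg]
    calc (fun n => ‖FormalMultilinearSeries.ofScalars ℂ a n‖ * (r : ℝ) ^ n)
        = fun n => ‖a n * ((r : ℝ) : ℂ) ^ n‖ := by
          simp_rw [FormalMultilinearSeries.ofScalars_norm]; exact this
      _ =O[Filter.atTop] fun _ => (1 : ℝ) := ht.norm.isBigO_one ℝ
  · exact one_pos
  · intro y hy
    have hy' : y ∈ Metric.ball (0 : ℂ) 1 := by
      rw [← Metric.eball_ofReal, ENNReal.ofReal_one]; exact hy
    have hc : ∀ n, (FormalMultilinearSeries.ofScalars ℂ a n) (fun _ => y) = a n * y ^ n := by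
      intro n
      rw [FormalMultilinearSeries.ofScalars_apply_eq]
      simp [smul_eq_mul, mul_comm]
    simpa [hc] using hrep y hy'

lemma ofScalars_coeff (a : ℕ → ℂ) (n : ℕ) :
    (FormalMultilinearSeries.ofScalars ℂ a).coeff n = a n := by
  rw [FormalMultilinearSeries.coeff, show (1 : Fin n → ℂ) = fun _ => (1:ℂ) from rfl,
    FormalMultilinearSeries.ofScalars_apply_eq]
  simp

lemma iterDeriv_coeff (a : ℕ → ℂ) (h : ℂ → ℂ)
    (hps : HasFPowerSeriesOnBall h (FormalMultilinearSeries.ofScalars ℂ a) 0 1) (n : ℕ) :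
    iteratedDeriv n h 0 = (n.factorial : ℂ) * a n := by
  have h1 := hps.factorial_smul (1 : ℂ) n
  have h2 : (FormalMultilinearSeries.ofScalars ℂ a n) (fun _ => (1:ℂ)) = a n := by
    rw [FormalMultilinearSeries.ofScalars_apply_eq]; simp
  rw [iteratedDeriv, ← h1, h2, nsmul_eq_mul]

lemma final_ineq (c₁ c₂ z : ℂ) (h1 : ‖c₁‖ ≤ 1)
    (h2 : ‖c₂‖ ≤ 1 - (‖c₁‖)^2)
    (hz : ‖z‖ < 1/2) :
    (1:ℝ)/4 < ((1:ℂ) + 2*c₁*z + (2*c₁^2 + 2*c₂)*z^2).re := by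
  have he : (1:ℂ) + 2*c₁*z + (2*c₁^2 + 2*c₂)*z^2
      = 1 + 2*(c₁*z) + 2*(c₁*z)^2 + 2*(c₂*z^2) := by ring
  rw [he]
  set s := c₁ * z with hs
  have hre : ((1:ℂ) + 2*s + 2*s^2 + 2*(c₂*z^2)).re
      = 1 + 2*s.re + 2*(s^2).re + 2*(c₂*z^2).re := by
    simp [Complex.add_re, Complex.mul_re]
  rw [hre]
  have hsq : (s^2).re = s.re^2 - s.im^2 := by
    rw [sq, Complex.mul_re]; ring
  have habs : s.re^2 + s.im^2 = (‖c₁‖)^2 * (‖z‖)^2 := by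
    have h3 := Complex.sq_norm s
    rw [Complex.normSq_apply] at h3
    calc s.re^2 + s.im^2 = ‖s‖ ^ 2 := by rw [h3]; ring
      _ = (‖c₁‖)^2 * (‖z‖)^2 := by rw [hs, norm_mul, mul_pow]
  have hc2 : -(‖c₂‖ * (‖z‖)^2) ≤ (c₂*z^2).re := by
    have h4 := (abs_le.mp (Complex.abs_re_le_norm (c₂ * z^2))).1
    rwa [norm_mul, norm_pow] at h4
  have hz2 : (‖z‖)^2 < 1/4 := by
    nlinarith [norm_nonneg z]
  nlinarith [sq_nonneg (2*s.re + 1/2), norm_nonneg c₂, norm_nonneg z,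
    sq_nonneg (‖z‖)]

lemma carath (P : ℂ → ℂ) (hd : DifferentiableOn ℂ P (ball (0:ℂ) 1))
    (hP0 : P 0 = 1) (hpos : ∀ w ∈ ball (0:ℂ) 1, 0 < (P w).re) :
    ∃ c₁ c₂ : ℂ, ‖c₁‖ ≤ 1 ∧ ‖c₂‖ ≤ 1 - (‖c₁‖)^2 ∧
      deriv P 0 = 2*c₁ ∧ deriv (deriv P) 0 = 4*c₁^2 + 4*c₂ := by
  have h0mem : (0:ℂ) ∈ ball (0:ℂ) 1 := mem_ball_self one_pos
  have hne : ∀ w ∈ ball (0:ℂ) 1, P w + 1 ≠ 0 := by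
    intro w hw hc
    have h1 := hpos w hw
    have : P w = -1 := by linear_combination hc
    rw [this] at h1
    norm_num at h1
  set ω : ℂ → ℂ := fun w => (P w - 1)/(P w + 1) with hω
  have ωd : DifferentiableOn ℂ ω (ball (0:ℂ) 1) :=
    (hd.sub (differentiableOn_const 1)).div (hd.add (differentiableOn_const 1)) hne
  have ω0 : ω 0 = 0 := by simp [hω, hP0]
  have ωmaps : Set.MapsTo ω (ball (0:ℂ) 1) (ball (0:ℂ) 1) := by
    intro w hw
    have h1 := hpos w hw
    have hns : Complex.normSq (P w - 1) < Complex.normSq (P w + 1) := by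
      simp only [Complex.normSq_apply, Complex.sub_re, Complex.sub_im, Complex.add_re,
        Complex.add_im, Complex.one_re, Complex.one_im]
      nlinarith
    have habs : ‖P w - 1‖ < ‖P w + 1‖ := by
      rw [Complex.norm_def, Complex.norm_def]
      exact Real.sqrt_lt_sqrt (Complex.normSq_nonneg _) hns
    have habs' : 0 < ‖P w + 1‖ :=
      norm_pos_iff.mpr (hne w hw)
    rw [mem_ball, dist_zero_right, hω]
    simp only [norm_div]
    rw [div_lt_one habs']
    exact habs
  set φ : ℂ → ℂ := dslope ω 0 with hφ
  have φd : DifferentiableOn ℂ φ (ball (0:ℂ) 1) :=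
    (Complex.differentiableOn_dslope (ball_mem_nhds 0 one_pos)).mpr ωd
  have φbd : ∀ w ∈ ball (0:ℂ) 1, ‖φ w‖ ≤ 1 := by
    intro w hw
    have hmaps' : Set.MapsTo ω (ball (0:ℂ) 1) (ball (ω 0) 1) := by rwa [ω0]
    have := Complex.norm_dslope_le_div_of_mapsTo_ball ωd (hmaps'.mono_right ball_subset_closedBall) hw
    simpa using this
  set c₁ : ℂ := φ 0 with hc1def
  set c₂ : ℂ := deriv φ 0 with hc2def
  have hc₁ : ‖c₁‖ ≤ 1 := φbd 0 h0mem
  have hzφ : ∀ w, w * φ w = ω w := by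
    intro w
    rcases eq_or_ne w 0 with rfl | hw0
    · simp [ω0]
    · rw [hφ, dslope_of_ne ω hw0, slope_def_field, ω0]
      field_simp
      ring
  -- differentiability of higher derivatives
  have Pan : AnalyticOnNhd ℂ P (ball (0:ℂ) 1) := hd.analyticOnNhd isOpen_ball
  have Pd' : DifferentiableOn ℂ (deriv P) (ball (0:ℂ) 1) := Pan.deriv.differentiableOn
  have φan : AnalyticOnNhd ℂ φ (ball (0:ℂ) 1) := φd.analyticOnNhd isOpen_ball
  have φd' : DifferentiableOn ℂ (deriv φ) (ball (0:ℂ) 1) := φan.deriv.differentiableOn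
  have hφ0' : HasDerivAt φ c₂ 0 :=
    ((φd.differentiableAt (isOpen_ball.mem_nhds h0mem)).hasDerivAt)
  have hP0' : HasDerivAt P (deriv P 0) 0 :=
    ((hd.differentiableAt (isOpen_ball.mem_nhds h0mem)).hasDerivAt)
  -- the functional identity
  set F : ℂ → ℂ := fun w => P w * (1 - w * φ w) - (1 + w * φ w) with hF
  have hFeq : Set.EqOn F (fun _ => (0:ℂ)) (ball (0:ℂ) 1) := by
    intro w hw
    show P w * (1 - w * φ w) - (1 + w * φ w) = 0
    rw [hzφ w, hω]
    have h2 : P w + 1 ≠ 0 := hne w hw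
    field_simp [h2]
    ring
  have hF0 : F =ᶠ[nhds 0] (fun _ => (0:ℂ)) :=
    Filter.eventuallyEq_of_mem (isOpen_ball.mem_nhds h0mem) hFeq
  have hdF : deriv F =ᶠ[nhds 0] (fun _ => (0:ℂ)) := by
    have h1 := hF0.deriv
    have h2 : deriv (fun _ : ℂ => (0:ℂ)) = fun _ => (0:ℂ) := by
      funext x; exact deriv_const x 0
    rwa [h2] at h1
  set R : ℂ → ℂ := fun w =>
    deriv P w * (1 - w * φ w) - P w * (φ w + w * deriv φ w) - (φ w + w * deriv φ w) with hRdef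
  have hR : ∀ w ∈ ball (0:ℂ) 1, deriv F w = R w := by
    intro w hw
    have hPw : HasDerivAt P (deriv P w) w :=
      (hd.differentiableAt (isOpen_ball.mem_nhds hw)).hasDerivAt
    have hφw : HasDerivAt φ (deriv φ w) w :=
      (φd.differentiableAt (isOpen_ball.mem_nhds hw)).hasDerivAt
    have hwφ : HasDerivAt (fun w => w * φ w) (1 * φ w + w * deriv φ w) w :=
      (hasDerivAt_id w).mul hφw
    have h1 : HasDerivAt (fun w => (1:ℂ) - w * φ w) (0 - (1 * φ w + w * deriv φ w)) w :=
      (hasDerivAt_const w (1:ℂ)).sub hwφ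
    have h2 : HasDerivAt (fun w => (1:ℂ) + w * φ w) (0 + (1 * φ w + w * deriv φ w)) w :=
      (hasDerivAt_const w (1:ℂ)).add hwφ
    have h3 : HasDerivAt F
        (deriv P w * (1 - w * φ w) + P w * (0 - (1 * φ w + w * deriv φ w))
          - (0 + (1 * φ w + w * deriv φ w))) w :=
      (hPw.mul h1).sub h2
    rw [h3.deriv, hRdef]
    ring
  have hdF0 : deriv P 0 - 2*c₁ = 0 := by
    have h1 : deriv F 0 = 0 := hdF.self_of_nhds
    rw [hR 0 h0mem] at h1
    rw [hRdef] at h1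
    simp only [hP0, ← hc1def] at h1
    linear_combination h1
  have p1 : deriv P 0 = 2*c₁ := by linear_combination hdF0
  -- second derivative
  have hReq : deriv F =ᶠ[nhds 0] R :=
    Filter.eventuallyEq_of_mem (isOpen_ball.mem_nhds h0mem) hR
  have hdR0 : deriv R 0 = 0 := by
    rw [← hReq.deriv_eq]
    have := hdF.deriv
    have h2 : deriv (fun _ : ℂ => (0:ℂ)) = fun _ => (0:ℂ) := by
      funext x; exact deriv_const x 0
    rw [h2] at this
    exact this.self_of_nhds
  have hP2' : HasDerivAt (deriv P) (deriv (deriv P) 0) 0 :=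
    (Pd'.differentiableAt (isOpen_ball.mem_nhds h0mem)).hasDerivAt
  have hφ2' : HasDerivAt (deriv φ) (deriv (deriv φ) 0) 0 :=
    (φd'.differentiableAt (isOpen_ball.mem_nhds h0mem)).hasDerivAt
  have hwφ0 : HasDerivAt (fun w => w * φ w) (1 * φ 0 + 0 * deriv φ 0) 0 :=
    (hasDerivAt_id 0).mul hφ0'
  have hAux : HasDerivAt (fun w => φ w + w * deriv φ w)
      (deriv φ 0 + (1 * deriv φ 0 + 0 * deriv (deriv φ) 0)) 0 :=
    hφ0'.add ((hasDerivAt_id 0).mul hφ2')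
  have hRd : HasDerivAt R
      ((deriv (deriv P) 0 * (1 - 0 * φ 0) + deriv P 0 * (0 - (1 * φ 0 + 0 * deriv φ 0)))
        - (deriv P 0 * (φ 0 + 0 * deriv φ 0) + P 0 * (deriv φ 0 + (1 * deriv φ 0 + 0 * deriv (deriv φ) 0)))
        - (deriv φ 0 + (1 * deriv φ 0 + 0 * deriv (deriv φ) 0))) 0 := by
    have h1 : HasDerivAt (fun w => (1:ℂ) - w * φ w) (0 - (1 * φ 0 + 0 * deriv φ 0)) 0 :=
      (hasDerivAt_const 0 (1:ℂ)).sub hwφ0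
    exact ((hP2'.mul h1).sub (hP0'.mul hAux)).sub hAux
  have p2 : deriv (deriv P) 0 = 4*c₁^2 + 4*c₂ := by
    have h1 := hRd.deriv
    rw [hdR0] at h1
    simp only [hP0, ← hc1def, ← hc2def] at h1
    linear_combination -h1 + 2*c₁*hdF0
  -- the bound on c₂
  have hc₂ : ‖c₂‖ ≤ 1 - (‖c₁‖)^2 := by
    rcases lt_or_eq_of_le hc₁ with hlt | heq
    · -- Möbius + Schwarz
      have hnsc : Complex.normSq c₁ < 1 := by
        rw [← Complex.sq_norm]; nlinarith [norm_nonneg c₁]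
      have denom : ∀ w ∈ ball (0:ℂ) 1, (1:ℂ) - (starRingEnd ℂ) c₁ * φ w ≠ 0 := by
        intro w hw hcon
        have h1 : ‖(starRingEnd ℂ) c₁ * φ w‖ ≤ ‖c₁‖ := by
          rw [norm_mul, Complex.norm_conj]
          calc ‖c₁‖ * ‖φ w‖ ≤ ‖c₁‖ * 1 :=
                mul_le_mul_of_nonneg_left (φbd w hw) (norm_nonneg _)
            _ = ‖c₁‖ := mul_one _
        have h2 : (starRingEnd ℂ) c₁ * φ w = 1 := by linear_combination -hcon
        rw [h2] at h1
        simp at h1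
        linarith
      set ψ : ℂ → ℂ := fun w => (φ w - c₁)/(1 - (starRingEnd ℂ) c₁ * φ w) with hψ
      have ψd : DifferentiableOn ℂ ψ (ball (0:ℂ) 1) :=
        (φd.sub (differentiableOn_const c₁)).div
          ((differentiableOn_const 1).sub ((differentiableOn_const _).mul φd)) denom
      have ψ0 : ψ 0 = 0 := by
        rw [hψ]; simp [← hc1def]
      have ψbd : ∀ w ∈ ball (0:ℂ) 1, ‖ψ w‖ ≤ 1 := by
        intro w hw
        have hu : Complex.normSq (φ w) ≤ 1 := by
          rw [← Complex.sq_norm]; nlinarith [φbd w hw, norm_nonneg (φ w)]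
        have key : Complex.normSq (φ w - c₁) ≤ Complex.normSq (1 - (starRingEnd ℂ) c₁ * φ w) := by
          simp only [Complex.normSq_apply, Complex.sub_re, Complex.sub_im, Complex.one_re,
            Complex.one_im, Complex.mul_re, Complex.mul_im, Complex.conj_re, Complex.conj_im]
          have e1 : Complex.normSq (φ w) = (φ w).re^2 + (φ w).im^2 := by
            rw [Complex.normSq_apply]; ring
          have e2 : Complex.normSq c₁ = c₁.re^2 + c₁.im^2 := by
            rw [Complex.normSq_apply]; ring
          nlinarith [hu, hnsc.le]
        have habs : ‖φ w - c₁‖ ≤ ‖1 - (starRingEnd ℂ) c₁ * φ w‖ := by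
          rw [Complex.norm_def, Complex.norm_def]
          exact Real.sqrt_le_sqrt key
        have hpos' : 0 < ‖1 - (starRingEnd ℂ) c₁ * φ w‖ :=
          norm_pos_iff.mpr (denom w hw)
        rw [hψ]
        simp only [norm_div]
        rw [div_le_one hpos']
        exact habs
      have hψR : ∀ Rr : ℝ, 1 < Rr → ‖deriv ψ 0‖ ≤ Rr := by
        intro Rr hRr
        have hmaps : Set.MapsTo ψ (ball (0:ℂ) 1) (ball (ψ 0) Rr) := by
          intro w hw
          rw [ψ0, mem_ball, dist_zero_right]
          exact lt_of_le_of_lt (ψbd w hw) hRr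
        have := Complex.norm_deriv_le_div_of_mapsTo_ball ψd (hmaps.mono_right ball_subset_closedBall) one_pos
        simpa using this
      have hψ1 : ‖deriv ψ 0‖ ≤ 1 :=
        le_of_forall_gt_imp_ge_of_dense hψR
      -- compute deriv ψ 0
      have hden0 : (1:ℂ) - (starRingEnd ℂ) c₁ * c₁ ≠ 0 := by
        have := denom 0 h0mem
        rwa [← hc1def] at this
      have hdψ : HasDerivAt ψ
          ((c₂ * (1 - (starRingEnd ℂ) c₁ * c₁) - (c₁ - c₁) * (0 - (starRingEnd ℂ) c₁ * c₂))
            / (1 - (starRingEnd ℂ) c₁ * c₁)^2) 0 := by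
        have hnum : HasDerivAt (fun w => φ w - c₁) c₂ 0 := hφ0'.sub_const c₁
        have hden : HasDerivAt (fun w => (1:ℂ) - (starRingEnd ℂ) c₁ * φ w)
            (0 - (starRingEnd ℂ) c₁ * c₂) 0 :=
          (hasDerivAt_const 0 (1:ℂ)).sub (hφ0'.const_mul _)
        have := hnum.div hden (by rw [← hc1def]; exact hden0)
        exact this
      have hdψval : deriv ψ 0 = c₂ / (1 - (starRingEnd ℂ) c₁ * c₁) := by
        rw [hdψ.deriv]
        field_simp
        ring
      have hcc : (1:ℂ) - (starRingEnd ℂ) c₁ * c₁ = ((1 - Complex.normSq c₁ : ℝ) : ℂ) := by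
        rw [Complex.ofReal_sub, Complex.ofReal_one, Complex.normSq_eq_conj_mul_self]
      have habsden : ‖1 - (starRingEnd ℂ) c₁ * c₁‖ = 1 - Complex.normSq c₁ := by
        rw [hcc, Complex.norm_real, Real.norm_eq_abs, abs_of_pos (by linarith)]
      have : ‖c₂‖ / (1 - Complex.normSq c₁) ≤ 1 := by
        rw [← habsden, ← norm_div, ← hdψval]
        exact hψ1
      rw [div_le_one (by linarith)] at this
      rw [Complex.sq_norm]
      exact this
    · -- max modulus case
      have hmax : IsMaxOn (norm ∘ φ) (ball (0:ℂ) 1) 0 := by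
        rw [isMaxOn_iff]
        intro w hw
        simp only [Function.comp_apply]
        rw [← hc1def, heq]
        exact φbd w hw
      have hconst := Complex.eqOn_of_isPreconnected_of_isMaxOn_norm
        (convex_ball (0:ℂ) 1).isPreconnected isOpen_ball φd h0mem hmax
      have hev : φ =ᶠ[nhds 0] (fun _ => c₁) :=
        Filter.eventuallyEq_of_mem (isOpen_ball.mem_nhds h0mem) hconst
      have : c₂ = 0 := by
        rw [hc2def, hev.deriv_eq, deriv_const]
      rw [this, heq]
      norm_num
  exact ⟨c₁, c₂, hc₁, hc₂, p1, p2⟩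

lemma deriv_cubic (c1 c2 c3 : ℂ) :
    deriv (fun w : ℂ => c1*w + c2*w^2 + c3*w^3) = fun z => c1 + 2*c2*z + 3*c3*z^2 := by
  funext z
  have h1 : HasDerivAt (fun w : ℂ => c1 * w) c1 z := by
    simpa using (hasDerivAt_id z).const_mul c1
  have h2 : HasDerivAt (fun w : ℂ => c2 * w^2) (c2 * (2*z)) z := by
    simpa using (hasDerivAt_pow 2 z).const_mul c2
  have h3 : HasDerivAt (fun w : ℂ => c3 * w^3) (c3 * (3*z^2)) z := by
    simpa using (hasDerivAt_pow 3 z).const_mul c3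
  have H := (h1.add h2).add h3
  rw [show deriv (fun w : ℂ => c1*w + c2*w^2 + c3*w^3) z = _ from H.deriv]; ring

lemma deriv_quad (c1 c2 c3 : ℂ) :
    deriv (fun z : ℂ => c1 + 2*c2*z + 3*c3*z^2) = fun z => 2*c2 + 6*c3*z := by
  funext z
  have h1 : HasDerivAt (fun _ : ℂ => c1) 0 z := hasDerivAt_const z c1
  have h2 : HasDerivAt (fun w : ℂ => 2*c2*w) (2*c2) z := by
    simpa using (hasDerivAt_id z).const_mul (2*c2)
  have h3 : HasDerivAt (fun w : ℂ => 3*c3*w^2) (3*c3*(2*z)) z := by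
    simpa [mul_assoc] using (hasDerivAt_pow 2 z).const_mul (3*c3)
  have H := (h1.add h2).add h3
  rw [show deriv (fun z : ℂ => c1 + 2*c2*z + 3*c3*z^2) z = _ from H.deriv]; ring
/-- for f ∈ W⁰_H(α), the third partial sums satisfy
Re((s₃(h) + ε s₃(g))'(z) + αz(s₃(h) + ε s₃(g))''(z)) > 1/4 for |z| < 1/2, |ε| = 1. -/
theorem stmt_14 (α : ℝ) (hα : 0 ≤ α) (a b : ℕ → ℂ) (h g : ℂ → ℂ)
    (ha0 : a 0 = 0) (ha1 : a 1 = 1) (hb0 : b 0 = 0) (hb1 : b 1 = 0)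
    (hrep : ∀ z ∈ Metric.ball (0 : ℂ) 1, HasSum (fun n => a n * z ^ n) (h z))
    (grep : ∀ z ∈ Metric.ball (0 : ℂ) 1, HasSum (fun n => b n * z ^ n) (g z))
    (hf : ∀ z ∈ Metric.ball (0 : ℂ) 1,
        ‖deriv g z + (α : ℂ) * z * deriv (deriv g) z‖
          < (deriv h z + (α : ℂ) * z * deriv (deriv h) z).re) :
    ∀ ε : ℂ, ‖ε‖ = 1 → ∀ z : ℂ, ‖z‖ < 1 / 2 →
      (1 : ℝ) / 4 <
        (deriv (fun w : ℂ => ∑ k ∈ Finset.Icc 1 3, (a k + ε * b k) * w ^ k) z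
          + (α : ℂ) * z *
            deriv (deriv (fun w : ℂ => ∑ k ∈ Finset.Icc 1 3, (a k + ε * b k) * w ^ k)) z).re := by
  intro ε hε z hz
  have hball : EMetric.ball (0:ℂ) 1 = Metric.ball (0:ℂ) 1 := by
    ext w
    rw [← Metric.eball_ofReal, ENNReal.ofReal_one]; exact Iff.rfl
  have h0mem : (0:ℂ) ∈ ball (0:ℂ) 1 := mem_ball_self one_pos
  -- power series and derivatives of h
  have hps := hasFPSOB_of_hasSum a h hrep
  have gps := hasFPSOB_of_hasSum b g grep
  have hd0 : DifferentiableOn ℂ h (ball (0:ℂ) 1) := hball ▸ hps.differentiableOn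
  have gd0 : DifferentiableOn ℂ g (ball (0:ℂ) 1) := hball ▸ gps.differentiableOn
  have han0 : AnalyticOnNhd ℂ h (ball (0:ℂ) 1) := hd0.analyticOnNhd isOpen_ball
  have gan0 : AnalyticOnNhd ℂ g (ball (0:ℂ) 1) := gd0.analyticOnNhd isOpen_ball
  have han1 := han0.deriv; have gan1 := gan0.deriv
  have han2 := han1.deriv; have gan2 := gan1.deriv
  have han3 := han2.deriv; have gan3 := gan2.deriv
  have hd1 : DifferentiableOn ℂ (deriv h) (ball (0:ℂ) 1) := han1.differentiableOn
  have gd1 : DifferentiableOn ℂ (deriv g) (ball (0:ℂ) 1) := gan1.differentiableOn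
  have hd2 : DifferentiableOn ℂ (deriv (deriv h)) (ball (0:ℂ) 1) := han2.differentiableOn
  have gd2 : DifferentiableOn ℂ (deriv (deriv g)) (ball (0:ℂ) 1) := gan2.differentiableOn
  have hd3 : DifferentiableOn ℂ (deriv (deriv (deriv h))) (ball (0:ℂ) 1) := han3.differentiableOn
  have gd3 : DifferentiableOn ℂ (deriv (deriv (deriv g))) (ball (0:ℂ) 1) := gan3.differentiableOn
  -- coefficient values
  have hder1 : deriv h 0 = 1 := by
    have := iterDeriv_coeff a h hps 1
    rw [iteratedDeriv_one] at this
    simp [ha1] at this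
    exact this
  have gder1 : deriv g 0 = 0 := by
    have := iterDeriv_coeff b g gps 1
    rw [iteratedDeriv_one] at this
    simp [hb1] at this
    exact this
  have hder2 : deriv (deriv h) 0 = 2 * a 2 := by
    have := iterDeriv_coeff a h hps 2
    rw [iteratedDeriv_succ, iteratedDeriv_one] at this
    norm_num at this
    exact this
  have gder2 : deriv (deriv g) 0 = 2 * b 2 := by
    have := iterDeriv_coeff b g gps 2
    rw [iteratedDeriv_succ, iteratedDeriv_one] at this
    norm_num at this
    exact this
  have hder3 : deriv (deriv (deriv h)) 0 = 6 * a 3 := by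
    have := iterDeriv_coeff a h hps 3
    rw [iteratedDeriv_succ, iteratedDeriv_succ, iteratedDeriv_one] at this
    norm_num at this
    exact this
  have gder3 : deriv (deriv (deriv g)) 0 = 6 * b 3 := by
    have := iterDeriv_coeff b g gps 3
    rw [iteratedDeriv_succ, iteratedDeriv_succ, iteratedDeriv_one] at this
    norm_num at this
    exact this
  -- the function P
  set P : ℂ → ℂ := fun w => (deriv h w + (α:ℂ)*w*deriv (deriv h) w)
      + ε*(deriv g w + (α:ℂ)*w*deriv (deriv g) w) with hPdef
  have hPd : DifferentiableOn ℂ P (ball (0:ℂ) 1) := by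
    apply DifferentiableOn.add
    · exact hd1.add (((differentiableOn_const _).mul differentiableOn_id).mul hd2)
    · exact ((gd1.add (((differentiableOn_const _).mul differentiableOn_id).mul gd2))).const_mul ε
  have hP0 : P 0 = 1 := by
    rw [hPdef]
    simp [hder1, gder1]
  have hpos : ∀ w ∈ ball (0:ℂ) 1, 0 < (P w).re := by
    intro w hw
    have h1 := hf w hw
    have h2 := (abs_le.mp (Complex.abs_re_le_norm
      (ε*(deriv g w + (α:ℂ)*w*deriv (deriv g) w)))).1
    rw [norm_mul, hε, one_mul] at h2
    have h3 : (P w).re = (deriv h w + (α:ℂ)*w*deriv (deriv h) w).re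
        + (ε*(deriv g w + (α:ℂ)*w*deriv (deriv g) w)).re := by
      rw [hPdef]; simp [Complex.add_re]
    rw [h3]
    linarith
  obtain ⟨c₁, c₂, hc₁, hc₂, p1, p2⟩ := carath P hPd hP0 hpos
  -- first derivative of P at 0
  have hH2at : HasDerivAt (deriv h) (deriv (deriv h) 0) 0 :=
    (hd1.differentiableAt (isOpen_ball.mem_nhds h0mem)).hasDerivAt
  have gH2at : HasDerivAt (deriv g) (deriv (deriv g) 0) 0 :=
    (gd1.differentiableAt (isOpen_ball.mem_nhds h0mem)).hasDerivAt
  have hH3at : HasDerivAt (deriv (deriv h)) (deriv (deriv (deriv h)) 0) 0 :=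
    (hd2.differentiableAt (isOpen_ball.mem_nhds h0mem)).hasDerivAt
  have gH3at : HasDerivAt (deriv (deriv g)) (deriv (deriv (deriv g)) 0) 0 :=
    (gd2.differentiableAt (isOpen_ball.mem_nhds h0mem)).hasDerivAt
  have hH4at : HasDerivAt (deriv (deriv (deriv h))) (deriv (deriv (deriv (deriv h))) 0) 0 :=
    (hd3.differentiableAt (isOpen_ball.mem_nhds h0mem)).hasDerivAt
  have gH4at : HasDerivAt (deriv (deriv (deriv g))) (deriv (deriv (deriv (deriv g))) 0) 0 :=
    (gd3.differentiableAt (isOpen_ball.mem_nhds h0mem)).hasDerivAt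
  have haw : HasDerivAt (fun w : ℂ => (α:ℂ)*w) (α:ℂ) 0 := by
    simpa using (hasDerivAt_id (0:ℂ)).const_mul (α:ℂ)
  have hp1val : deriv P 0 = 2*(1+(α:ℂ))*(a 2 + ε * b 2) := by
    have H : HasDerivAt P
        ((deriv (deriv h) 0 + ((α:ℂ) * deriv (deriv h) 0 + ((α:ℂ)*0) * deriv (deriv (deriv h)) 0))
          + ε*(deriv (deriv g) 0 + ((α:ℂ) * deriv (deriv g) 0
            + ((α:ℂ)*0) * deriv (deriv (deriv g)) 0))) 0 := by
      have t1 : HasDerivAt (fun w : ℂ => (α:ℂ)*w*deriv (deriv h) w)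
          ((α:ℂ) * deriv (deriv h) 0 + ((α:ℂ)*0) * deriv (deriv (deriv h)) 0) 0 := by have t : HasDerivAt (fun w : ℂ => (α:ℂ)*w*deriv (deriv h) w) _ 0 := haw.mul hH3at; simpa using t
      have t2 : HasDerivAt (fun w : ℂ => (α:ℂ)*w*deriv (deriv g) w)
          ((α:ℂ) * deriv (deriv g) 0 + ((α:ℂ)*0) * deriv (deriv (deriv g)) 0) 0 := by have t : HasDerivAt (fun w : ℂ => (α:ℂ)*w*deriv (deriv g) w) _ 0 := haw.mul gH3at; simpa using t
      exact (hH2at.add t1).add ((gH2at.add t2).const_mul ε)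
    rw [H.deriv, hder2, gder2]
    ring
  -- second derivative of P at 0
  set Q : ℂ → ℂ := fun w => (deriv (deriv h) w + ((α:ℂ) * deriv (deriv h) w
      + ((α:ℂ)*w) * deriv (deriv (deriv h)) w))
      + ε*(deriv (deriv g) w + ((α:ℂ) * deriv (deriv g) w
      + ((α:ℂ)*w) * deriv (deriv (deriv g)) w)) with hQdef
  have hQ : ∀ w ∈ ball (0:ℂ) 1, deriv P w = Q w := by
    intro w hw
    have hH2w : HasDerivAt (deriv h) (deriv (deriv h) w) w :=
      (hd1.differentiableAt (isOpen_ball.mem_nhds hw)).hasDerivAt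
    have gH2w : HasDerivAt (deriv g) (deriv (deriv g) w) w :=
      (gd1.differentiableAt (isOpen_ball.mem_nhds hw)).hasDerivAt
    have hH3w : HasDerivAt (deriv (deriv h)) (deriv (deriv (deriv h)) w) w :=
      (hd2.differentiableAt (isOpen_ball.mem_nhds hw)).hasDerivAt
    have gH3w : HasDerivAt (deriv (deriv g)) (deriv (deriv (deriv g)) w) w :=
      (gd2.differentiableAt (isOpen_ball.mem_nhds hw)).hasDerivAt
    have haww : HasDerivAt (fun w : ℂ => (α:ℂ)*w) (α:ℂ) w := by
      simpa using (hasDerivAt_id w).const_mul (α:ℂ)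
    have t1 : HasDerivAt (fun w : ℂ => (α:ℂ)*w*deriv (deriv h) w)
        ((α:ℂ) * deriv (deriv h) w + ((α:ℂ)*w) * deriv (deriv (deriv h)) w) w := by have t : HasDerivAt (fun w : ℂ => (α:ℂ)*w*deriv (deriv h) w) _ w := haww.mul hH3w; simpa using t
    have t2 : HasDerivAt (fun w : ℂ => (α:ℂ)*w*deriv (deriv g) w)
        ((α:ℂ) * deriv (deriv g) w + ((α:ℂ)*w) * deriv (deriv (deriv g)) w) w := by have t : HasDerivAt (fun w : ℂ => (α:ℂ)*w*deriv (deriv g) w) _ w := haww.mul gH3w; simpa using t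
    have H := (hH2w.add t1).add ((gH2w.add t2).const_mul ε)
    rw [show deriv P w = _ from H.deriv, hQdef]
  have hp2val : deriv (deriv P) 0 = 6*(1+2*(α:ℂ))*(a 3 + ε * b 3) := by
    have hev : deriv P =ᶠ[nhds 0] Q :=
      Filter.eventuallyEq_of_mem (isOpen_ball.mem_nhds h0mem) hQ
    rw [hev.deriv_eq]
    have t1 : HasDerivAt (fun w : ℂ => ((α:ℂ)*w) * deriv (deriv (deriv h)) w)
        ((α:ℂ) * deriv (deriv (deriv h)) 0 + ((α:ℂ)*0) * deriv (deriv (deriv (deriv h))) 0) 0 := by have t : HasDerivAt (fun w : ℂ => (α:ℂ)*w*deriv (deriv (deriv h)) w) _ 0 := haw.mul hH4at; simpa using t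
    have t2 : HasDerivAt (fun w : ℂ => ((α:ℂ)*w) * deriv (deriv (deriv g)) w)
        ((α:ℂ) * deriv (deriv (deriv g)) 0 + ((α:ℂ)*0) * deriv (deriv (deriv (deriv g))) 0) 0 := by have t : HasDerivAt (fun w : ℂ => (α:ℂ)*w*deriv (deriv (deriv g)) w) _ 0 := haw.mul gH4at; simpa using t
    have H : HasDerivAt Q
        ((deriv (deriv (deriv h)) 0 + ((α:ℂ) * deriv (deriv (deriv h)) 0
          + ((α:ℂ) * deriv (deriv (deriv h)) 0 + ((α:ℂ)*0) * deriv (deriv (deriv (deriv h))) 0)))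
        + ε*(deriv (deriv (deriv g)) 0 + ((α:ℂ) * deriv (deriv (deriv g)) 0
          + ((α:ℂ) * deriv (deriv (deriv g)) 0 + ((α:ℂ)*0) * deriv (deriv (deriv (deriv g))) 0)))) 0 :=
      (hH3at.add ((hH3at.const_mul (α:ℂ)).add t1)).add
        ((gH3at.add ((gH3at.const_mul (α:ℂ)).add t2)).const_mul ε)
    rw [H.deriv, hder3, gder3]
    ring
  -- relate coefficients
  have e1 : 2*c₁ = 2*(1+(α:ℂ))*(a 2 + ε * b 2) := p1.symm.trans hp1val
  have e2 : 4*c₁^2 + 4*c₂ = 6*(1+2*(α:ℂ))*(a 3 + ε * b 3) := p2.symm.trans hp2val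
  -- rewrite the target polynomial
  have hT : (fun w : ℂ => ∑ k ∈ Finset.Icc 1 3, (a k + ε * b k) * w ^ k)
      = fun w => (a 1 + ε*b 1)*w + (a 2 + ε*b 2)*w^2 + (a 3 + ε*b 3)*w^3 := by
    funext w
    rw [show Finset.Icc 1 3 = ({1, 2, 3} : Finset ℕ) from rfl]
    rw [Finset.sum_insert (by decide), Finset.sum_insert (by decide), Finset.sum_singleton]
    ring
  rw [hT, deriv_cubic, deriv_quad]
  have key : ((a 1 + ε*b 1) + 2*(a 2 + ε*b 2)*z + 3*(a 3 + ε*b 3)*z^2)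
      + (α:ℂ)*z*(2*(a 2 + ε*b 2) + 6*(a 3 + ε*b 3)*z)
      = (1:ℂ) + 2*c₁*z + (2*c₁^2 + 2*c₂)*z^2 := by
    rw [ha1, hb1]
    linear_combination -z*e1 - (z^2/2)*e2
  rw [key]
  exact final_ineq c₁ c₂ z hc₁ hc₂ hz
end

section
/- If f = h + conj(g) ∈ W⁰_H(α), then for each q ≥ 2 the partial sum s_{1,q}(f)(z) = z + conj(Σ_{n=2}^q b_n z^n), viewed as a harmonic function on the disk |z| < 1/2, satisfies the W⁰_H(α) condition there: 1 = Re((z)' + αz(z)'') > |s_q(g)'(z) + αz s_q(g)''(z)| for all |z| < 1/2. -/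
open Complex Metric Set

noncomputable def ofc (c : ℕ → ℂ) : FormalMultilinearSeries ℂ ℂ ℂ :=
  fun n => ContinuousMultilinearMap.mkPiRing ℂ (Fin n) (c n)

lemma ofc_coeff (c : ℕ → ℂ) (n : ℕ) : (ofc c).coeff n = c n := by
  simp [ofc, FormalMultilinearSeries.coeff, ContinuousMultilinearMap.mkPiRing_apply]

lemma ofc_apply (c : ℕ → ℂ) (n : ℕ) (z : ℂ) :
    (ofc c n fun _ => z) = c n * z ^ n := by
  simp [ofc, ContinuousMultilinearMap.mkPiRing_apply, smul_eq_mul, mul_comm]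

lemma ofc_norm (c : ℕ → ℂ) (n : ℕ) : ‖ofc c n‖ = ‖c n‖ :=
  ContinuousMultilinearMap.norm_mkPiRing _

lemma hasFPB_of_hasSum {c : ℕ → ℂ} {F : ℂ → ℂ}
    (hc : ∀ z ∈ Metric.ball (0 : ℂ) 1, HasSum (fun n => c n * z ^ n) (F z)) :
    HasFPowerSeriesOnBall F (ofc c) 0 1 := by
  constructor
  · apply ENNReal.le_of_forall_nnreal_lt
    intro r hr
    have hr1 : (r : ℝ) < 1 := by exact_mod_cast hr
    set s : ℝ := (1 + r) / 2 with hs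
    have hs0 : 0 ≤ s := by positivity
    have hrs : (r : ℝ) ≤ s := by simp only [hs]; linarith
    have hs1 : s < 1 := by simp only [hs]; linarith
    have hmem : (s : ℂ) ∈ Metric.ball (0 : ℂ) 1 := by
      simp only [Metric.mem_ball, dist_zero_right, Complex.norm_real, Real.norm_eq_abs]
      rwa [_root_.abs_of_nonneg hs0]
    have hsum := (hc _ hmem).summable
    have htend : Filter.Tendsto (fun n => ‖c n * (s : ℂ) ^ n‖) Filter.atTop (nhds 0) := by
      simpa using hsum.tendsto_atTop_zero.norm
    obtain ⟨C, hC⟩ := htend.bddAbove_range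
    apply (ofc c).le_radius_of_bound C
    intro n
    have h1 : ‖ofc c n‖ * (r : ℝ) ^ n ≤ ‖c n * (s : ℂ) ^ n‖ := by
      rw [ofc_norm, norm_mul, norm_pow]
      have hns : ‖(s : ℂ)‖ = s := by
        rw [Complex.norm_real, Real.norm_eq_abs, _root_.abs_of_nonneg hs0]
      rw [hns]
      gcongr
    exact h1.trans (hC ⟨n, rfl⟩)
  · exact one_pos
  · intro y hy
    rw [mem_emetric_ball_zero_iff] at hy
    have : y ∈ Metric.ball (0 : ℂ) 1 := by
      simpa [Metric.mem_ball] using (by rw [enorm_eq_nnnorm] at hy; exact_mod_cast hy : (‖y‖₊ : ℝ) < 1)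
    have h2 := hc y this
    rw [zero_add]
    refine h2.congr_fun fun n => ?_
    rw [ofc_apply]
open Complex Metric Set

noncomputable def dser (p : FormalMultilinearSeries ℂ ℂ ℂ) : FormalMultilinearSeries ℂ ℂ ℂ :=
  (ContinuousLinearMap.apply ℂ ℂ (1 : ℂ)).compFormalMultilinearSeries p.derivSeries

lemma dser_coeff (p : FormalMultilinearSeries ℂ ℂ ℂ) (n : ℕ) :
    (dser p).coeff n = (n + 1 : ℂ) * p.coeff (n + 1) := by
  simp only [dser, FormalMultilinearSeries.coeff,
    ContinuousLinearMap.compFormalMultilinearSeries_apply,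
    ContinuousLinearMap.compContinuousMultilinearMap_coe, Function.comp_apply,
    ContinuousLinearMap.apply_apply]
  have hd := p.derivSeries_apply_diag n (1 : ℂ)
  have e1 : (fun _ : Fin (n+1) => (1:ℂ)) = (1 : Fin (n+1) → ℂ) := rfl
  have e2 : (fun _ : Fin n => (1:ℂ)) = (1 : Fin n → ℂ) := rfl
  rw [e1, e2] at hd
  rw [hd, nsmul_eq_mul]
  push_cast
  ring

lemma hasFPB_deriv {F : ℂ → ℂ} {p : FormalMultilinearSeries ℂ ℂ ℂ}
    (hF : HasFPowerSeriesOnBall F p 0 1) :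
    HasFPowerSeriesOnBall (deriv F) (dser p) 0 1 := by
  have h1 := (ContinuousLinearMap.apply ℂ ℂ (1 : ℂ)).comp_hasFPowerSeriesOnBall hF.fderiv
  have : (ContinuousLinearMap.apply ℂ ℂ (1 : ℂ)) ∘ (fderiv ℂ F) = deriv F := by
    funext z
    simp [ContinuousLinearMap.apply_apply, fderiv_apply_one_eq_deriv]
  rwa [this] at h1

lemma hasSum_Q {c : ℕ → ℂ} {G : ℂ → ℂ} (α : ℝ)
    (hg : ∀ z ∈ Metric.ball (0 : ℂ) 1, HasSum (fun n => c n * z ^ n) (G z))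
    {z : ℂ} (hz : z ∈ Metric.ball (0 : ℂ) 1) :
    HasSum (fun n : ℕ => ((n : ℂ) + 1) * (1 + (α : ℂ) * n) * c (n + 1) * z ^ n)
      (deriv G z + (α : ℂ) * z * deriv (deriv G) z) := by
  have h1 := hasFPB_deriv (hasFPB_of_hasSum hg)
  have h2 := hasFPB_deriv h1
  have emem : z ∈ Metric.eball (0 : ℂ) 1 := by
    rw [mem_emetric_ball_zero_iff, enorm_eq_nnnorm]
    exact_mod_cast (by simpa [Metric.mem_ball] using hz : ‖z‖ < 1)
  have S1 : HasSum (fun n => (dser (ofc c)).coeff n * z ^ n) (deriv G z) := by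
    have := h1.hasSum emem
    rw [zero_add] at this
    refine this.congr_fun fun n => ?_
    rw [(dser (ofc c)).apply_eq_pow_smul_coeff, smul_eq_mul, mul_comm]
  have S2 : HasSum (fun n => (dser (dser (ofc c))).coeff n * z ^ n) (deriv (deriv G) z) := by
    have := h2.hasSum emem
    rw [zero_add] at this
    refine this.congr_fun fun n => ?_
    rw [(dser (dser (ofc c))).apply_eq_pow_smul_coeff, smul_eq_mul, mul_comm]
  set t : ℕ → ℂ := fun n =>
    if n = 0 then 0 else (α : ℂ) * (dser (dser (ofc c))).coeff (n - 1) * z ^ n with ht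
  have S2' : HasSum (fun n => t (n + 1)) ((α : ℂ) * z * deriv (deriv G) z) := by
    refine (S2.mul_left ((α : ℂ) * z)).congr_fun fun n => ?_
    simp only [ht, Nat.add_sub_cancel, if_neg (Nat.succ_ne_zero n)]
    ring
  have St : HasSum t ((α : ℂ) * z * deriv (deriv G) z) := by
    have := (hasSum_nat_add_iff (f := t) 1).mp S2'
    simpa [ht] using this
  have Ssum := S1.add St
  refine Ssum.congr_fun fun n => ?_
  cases n with
  | zero =>
    simp only [ht, if_pos rfl, dser_coeff, ofc_coeff, pow_zero, add_zero, Nat.cast_zero]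
    push_cast
    ring
  | succ k =>
    simp only [ht, if_neg (Nat.succ_ne_zero k), Nat.add_sub_cancel, dser_coeff, ofc_coeff]
    push_cast
    ring

lemma diffOn_of_hasFPB {F : ℂ → ℂ} {p : FormalMultilinearSeries ℂ ℂ ℂ}
    (hF : HasFPowerSeriesOnBall F p 0 1) {r : ℝ} (hr1 : r < 1) :
    DifferentiableOn ℂ F (Metric.closedBall 0 r) := by
  intro w hw
  have hw1 : ‖w‖ < 1 := by
    have := Metric.mem_closedBall.mp hw
    simp only [dist_zero_right] at this
    exact lt_of_le_of_lt this hr1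
  have hmem : w ∈ Metric.eball (0 : ℂ) 1 := by
    rw [mem_emetric_ball_zero_iff, enorm_eq_nnnorm]
    exact_mod_cast hw1
  exact ((hF.analyticAt_of_mem hmem).differentiableAt).differentiableWithinAt

lemma contCirc {F : ℂ → ℂ} {p : FormalMultilinearSeries ℂ ℂ ℂ}
    (hF : HasFPowerSeriesOnBall F p 0 1) {r : ℝ} (hr0 : 0 < r) (hr1 : r < 1) :
    Continuous fun θ : ℝ => F (circleMap 0 r θ) := by
  refine ContinuousOn.comp_continuous
    ((diffOn_of_hasFPB hF hr1).continuousOn) (continuous_circleMap 0 r) fun θ => ?_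
  simp [abs_of_pos hr0, hr0.le]

lemma coeff_le_one {d da : ℕ → ℂ} {Q P : ℂ → ℂ}
    (hQ : HasFPowerSeriesOnBall Q (ofc d) 0 1)
    (hP : HasFPowerSeriesOnBall P (ofc da) 0 1)
    (hPQ : ∀ z ∈ Metric.ball (0 : ℂ) 1, ‖Q z‖ ≤ (P z).re)
    (hP0 : P 0 = 1) (m : ℕ) : ‖d m‖ ≤ 1 := by
  have key : ∀ r : ℝ, 0 < r → r < 1 → ‖d m‖ * r ^ m ≤ 1 := by
    intro r hr0 hr1
    lift r to NNReal using hr0.le with R hR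
    have hr0' : (0 : ℝ) < R := hr0
    have hcs : HasFPowerSeriesOnBall Q (cauchyPowerSeries Q 0 R) 0 R :=
      DifferentiableOn.hasFPowerSeriesOnBall (diffOn_of_hasFPB hQ hr1) (by exact_mod_cast hr0)
    have heq : ofc d = cauchyPowerSeries Q 0 R :=
      hQ.hasFPowerSeriesAt.eq_formalMultilinearSeries hcs.hasFPowerSeriesAt
    have habs : ‖d m‖ = ‖ofc d m‖ := by
      rw [ofc_norm]
    -- interval integrability
    have contQ := contCirc hQ hr0' hr1
    have contP := contCirc hP hr0' hr1
    have intQ : IntervalIntegrable (fun θ : ℝ => ‖Q (circleMap 0 R θ)‖)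
        MeasureTheory.volume 0 (2 * Real.pi) := (contQ.norm).intervalIntegrable _ _
    have intPc : IntervalIntegrable (fun θ : ℝ => P (circleMap 0 R θ))
        MeasureTheory.volume 0 (2 * Real.pi) := contP.intervalIntegrable _ _
    have intP : IntervalIntegrable (fun θ : ℝ => (P (circleMap 0 R θ)).re)
        MeasureTheory.volume 0 (2 * Real.pi) :=
      (Complex.continuous_re.comp contP).intervalIntegrable _ _
    -- mean value of P
    have hPmean : (∫ θ in (0 : ℝ)..2 * Real.pi, P (circleMap 0 R θ)) = 2 * Real.pi * P 0 := by
      have hdc : DiffContOnCl ℂ P (Metric.ball 0 (R : ℝ)) :=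
        ((diffOn_of_hasFPB hP hr1).mono Metric.closure_ball_subset_closedBall).diffContOnCl
      have h0 : (0 : ℂ) ∈ Metric.ball (0 : ℂ) (R : ℝ) := by
        simpa [Metric.mem_ball] using hr0'
      have := hdc.circleIntegral_sub_inv_smul h0
      simp only [circleIntegral, deriv_circleMap, sub_zero, smul_eq_mul] at this
      have hne : ∀ θ : ℝ, circleMap 0 (R : ℝ) θ ≠ 0 := fun θ =>
        circleMap_ne_center (ne_of_gt hr0')
      have heq2 : (∫ θ in (0 : ℝ)..2 * Real.pi,
          circleMap 0 (R : ℝ) θ * Complex.I * ((circleMap 0 (R : ℝ) θ)⁻¹ * P (circleMap 0 (R : ℝ) θ)))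
          = ∫ θ in (0 : ℝ)..2 * Real.pi, Complex.I * P (circleMap 0 (R : ℝ) θ) := by
        congr 1
        funext θ
        field_simp [hne θ]
      rw [heq2, intervalIntegral.integral_const_mul] at this
      have hI : (2 * (Real.pi : ℂ) * Complex.I) * P 0 =
          Complex.I * (2 * (Real.pi : ℂ) * P 0) := by ring
      rw [hI] at this
      exact mul_left_cancel₀ Complex.I_ne_zero this
    have hPre : (∫ θ in (0 : ℝ)..2 * Real.pi, (P (circleMap 0 R θ)).re) = 2 * Real.pi := by
      have := Complex.reCLM.intervalIntegral_comp_comm intPc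
      simp only [Complex.reCLM_apply] at this
      rw [this, hPmean, hP0]
      simp
    -- compare integrals
    have hcompare : (∫ θ in (0 : ℝ)..2 * Real.pi, ‖Q (circleMap 0 R θ)‖)
        ≤ ∫ θ in (0 : ℝ)..2 * Real.pi, (P (circleMap 0 R θ)).re := by
      refine intervalIntegral.integral_mono_on Real.two_pi_pos.le intQ intP fun θ _ => ?_
      have hmem : circleMap 0 (R : ℝ) θ ∈ Metric.ball (0 : ℂ) 1 := by
        simp [Metric.mem_ball, abs_of_pos hr0', hr1]
      simpa using hPQ _ hmem
    have hnorm := norm_cauchyPowerSeries_le Q 0 R m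
    rw [← heq, ofc_norm] at hnorm
    have h2pi : (0:ℝ) < 2 * Real.pi := Real.two_pi_pos
    have hfrac : (2 * Real.pi)⁻¹ * (∫ θ in (0:ℝ)..2 * Real.pi, ‖Q (circleMap 0 R θ)‖) ≤ 1 := by
      rw [← inv_mul_cancel₀ h2pi.ne']
      have h3 := hcompare.trans_eq hPre
      gcongr
    have habs' : ‖d m‖ ≤ |(R : ℝ)|⁻¹ ^ m := by
      refine hnorm.trans ?_
      calc ((2 * Real.pi)⁻¹ * ∫ θ in (0:ℝ)..2 * Real.pi, ‖Q (circleMap 0 R θ)‖) * |(R:ℝ)|⁻¹ ^ m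
          ≤ 1 * |(R:ℝ)|⁻¹ ^ m := mul_le_mul_of_nonneg_right hfrac (by positivity)
        _ = |(R:ℝ)|⁻¹ ^ m := one_mul _
    rw [abs_of_pos hr0'] at habs'
    calc ‖d m‖ * (R:ℝ) ^ m ≤ ((R:ℝ)⁻¹ ^ m) * (R:ℝ) ^ m := by
          gcongr
      _ = 1 := by
          rw [← mul_pow, inv_mul_cancel₀ (ne_of_gt hr0'), one_pow]
  -- pass to the limit r → 1⁻
  have htend : Filter.Tendsto (fun r : ℝ => ‖d m‖ * r ^ m)
      (nhdsWithin 1 (Set.Iio 1)) (nhds (‖d m‖)) := by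
    have : Filter.Tendsto (fun r : ℝ => ‖d m‖ * r ^ m) (nhds 1)
        (nhds (‖d m‖ * 1 ^ m)) := by
      exact ((continuous_const.mul (continuous_pow m)).tendsto 1)
    simpa using this.mono_left nhdsWithin_le_nhds
  refine le_of_tendsto htend ?_
  filter_upwards [Ioo_mem_nhdsLT_of_mem (by constructor <;> norm_num : (1:ℝ) ∈ Set.Ioc 0 1)]
    with r hr
  exact key r hr.1 hr.2

lemma geo_aux : ∀ k : ℕ, (∑ n ∈ Finset.Icc 2 (k + 1), ((1:ℝ)/2) ^ (n - 1)) + ((1:ℝ)/2) ^ k ≤ 1 := by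
  intro k
  induction k with
  | zero => simp
  | succ k ih =>
    rw [Finset.sum_Icc_succ_top (by omega : 2 ≤ k + 1 + 1)]
    have he : (k + 1 + 1 - 1) = k + 1 := by omega
    rw [he]
    have hp : ((1:ℝ)/2) ^ (k+1) + ((1:ℝ)/2) ^ (k+1) = ((1:ℝ)/2) ^ k := by
      rw [pow_succ]; ring
    linarith [hp, ih]

lemma geo (q : ℕ) : (∑ n ∈ Finset.Icc 2 q, ((1:ℝ)/2) ^ (n - 1)) ≤ 1 := by
  match q with
  | 0 => simp
  | 1 => simp
  | (k+1) =>
    have := geo_aux k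
    have hpos : (0:ℝ) ≤ ((1:ℝ)/2) ^ k := by positivity
    linarith

lemma deriv_poly1 (b : ℕ → ℂ) (q : ℕ) :
    deriv (fun w : ℂ => ∑ n ∈ Finset.Icc 2 q, b n * w ^ n)
      = fun w => ∑ n ∈ Finset.Icc 2 q, (b n * n) * w ^ (n - 1) := by
  funext w
  rw [deriv_fun_sum (fun i _ => (differentiableAt_pow _).const_mul _)]
  refine Finset.sum_congr rfl fun n _ => ?_
  rw [deriv_const_mul _ (differentiableAt_pow _), deriv_pow_field]
  ring

lemma deriv_poly2 (c : ℕ → ℂ) (q : ℕ) :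
    deriv (fun w : ℂ => ∑ n ∈ Finset.Icc 2 q, c n * w ^ (n - 1))
      = fun w => ∑ n ∈ Finset.Icc 2 q, (c n * (n - 1 : ℕ)) * w ^ (n - 2) := by
  funext w
  rw [deriv_fun_sum (fun i _ => (differentiableAt_pow _).const_mul _)]
  refine Finset.sum_congr rfl fun n _ => ?_
  rw [deriv_const_mul _ (differentiableAt_pow _), deriv_pow_field]
  have : n - 1 - 1 = n - 2 := by omega
  rw [this]
  ring

/-- for f ∈ W⁰_H(α) and q ≥ 2, the section s_{1,q}(f) satisfies
the W⁰_H(α) condition for |z| < 1/2: |s_q(g)'(z) + αz s_q(g)''(z)| < 1. -/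
theorem stmt_15 (α : ℝ) (hα : 0 ≤ α) (a b : ℕ → ℂ) (h g : ℂ → ℂ)
    (ha0 : a 0 = 0) (ha1 : a 1 = 1) (hb0 : b 0 = 0) (hb1 : b 1 = 0)
    (hrep : ∀ z ∈ Metric.ball (0 : ℂ) 1, HasSum (fun n => a n * z ^ n) (h z))
    (grep : ∀ z ∈ Metric.ball (0 : ℂ) 1, HasSum (fun n => b n * z ^ n) (g z))
    (hf : ∀ z ∈ Metric.ball (0 : ℂ) 1,
        ‖deriv g z + (α : ℂ) * z * deriv (deriv g) z‖
          < (deriv h z + (α : ℂ) * z * deriv (deriv h) z).re) :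
    ∀ q : ℕ, 2 ≤ q → ∀ z : ℂ, ‖z‖ < 1 / 2 →
      ‖deriv (fun w : ℂ => ∑ n ∈ Finset.Icc 2 q, b n * w ^ n) z
          + (α : ℂ) * z *
            deriv (deriv (fun w : ℂ => ∑ n ∈ Finset.Icc 2 q, b n * w ^ n)) z‖ < 1 := by
  -- power series coefficients of Q = g' + α z g'' and P = h' + α z h''
  set d : ℕ → ℂ := fun n => ((n : ℂ) + 1) * (1 + (α : ℂ) * n) * b (n + 1) with hd
  set da : ℕ → ℂ := fun n => ((n : ℂ) + 1) * (1 + (α : ℂ) * n) * a (n + 1) with hda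
  set Q : ℂ → ℂ := fun z => deriv g z + (α : ℂ) * z * deriv (deriv g) z with hQdef
  set P : ℂ → ℂ := fun z => deriv h z + (α : ℂ) * z * deriv (deriv h) z with hPdef
  have hSQ : ∀ z ∈ Metric.ball (0 : ℂ) 1, HasSum (fun n => d n * z ^ n) (Q z) := by
    intro z hz
    exact (hasSum_Q α grep hz).congr_fun fun n => by rw [hd]
  have hSP : ∀ z ∈ Metric.ball (0 : ℂ) 1, HasSum (fun n => da n * z ^ n) (P z) := by
    intro z hz
    exact (hasSum_Q α hrep hz).congr_fun fun n => by rw [hda]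
  have hQ := hasFPB_of_hasSum hSQ
  have hP := hasFPB_of_hasSum hSP
  have hP0 : P 0 = 1 := by
    have h0 : (0 : ℂ) ∈ Metric.ball (0 : ℂ) 1 := by simp
    have h1 := hSP 0 h0
    have h2 : HasSum (fun n => da n * (0 : ℂ) ^ n) (da 0) := by
      have := hasSum_single (f := fun n => da n * (0 : ℂ) ^ n) 0
        (fun n hn => by show da n * (0 : ℂ) ^ n = 0; rw [zero_pow hn, mul_zero])
      simpa using this
    have := h1.unique h2
    rw [this, hda]
    simp [ha1]
  have hdb : ∀ m, ‖d m‖ ≤ 1 := by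
    refine coeff_le_one hQ hP (fun z hz => (hf z hz).le) hP0
  intro q hq z hz
  rw [deriv_poly1 b q, deriv_poly2 (fun n => b n * n) q]
  have hzterm : ∀ n ∈ Finset.Icc 2 q,
      (b n * n) * z ^ (n - 1) + (α : ℂ) * z * ((b n * n * ((n : ℕ) - 1 : ℕ)) * z ^ (n - 2))
        = d (n - 1) * z ^ (n - 1) := by
    intro n hn
    have hn2 : 2 ≤ n := (Finset.mem_Icc.mp hn).1
    have e1 : (n - 1) + 1 = n := by omega
    have e2 : (n - 2) + 1 = n - 1 := by omega
    have e3 : ((n - 1 : ℕ) : ℂ) = (n : ℂ) - 1 := by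
      push_cast [Nat.cast_sub (by omega : 1 ≤ n)]; ring
    have e4 : z * z ^ (n - 2) = z ^ (n - 1) := by
      rw [← pow_succ', e2]
    rw [hd]
    simp only [e1, e3]
    calc (b n * n) * z ^ (n - 1) + (α : ℂ) * z * ((b n * n * ((n : ℂ) - 1)) * z ^ (n - 2))
        = (b n * n) * z ^ (n - 1)
          + (α : ℂ) * (b n * n * ((n : ℂ) - 1)) * (z * z ^ (n - 2)) := by ring
      _ = (b n * n) * z ^ (n - 1) + (α : ℂ) * (b n * n * ((n : ℂ) - 1)) * z ^ (n - 1) := by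
          rw [e4]
      _ = ((n : ℂ) - 1 + 1) * (1 + (α : ℂ) * ((n : ℂ) - 1)) * b n * z ^ (n - 1) := by ring
  have hrw : (∑ n ∈ Finset.Icc 2 q, (b n * n) * z ^ (n - 1))
      + (α : ℂ) * z * (∑ n ∈ Finset.Icc 2 q, (b n * n * ((n : ℕ) - 1 : ℕ)) * z ^ (n - 2))
      = ∑ n ∈ Finset.Icc 2 q, d (n - 1) * z ^ (n - 1) := by
    rw [Finset.mul_sum, ← Finset.sum_add_distrib]
    exact Finset.sum_congr rfl hzterm
  rw [hrw]
  have step1 : ‖∑ n ∈ Finset.Icc 2 q, d (n - 1) * z ^ (n - 1)‖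
      ≤ ∑ n ∈ Finset.Icc 2 q, ‖z‖ ^ (n - 1) := by
    refine (norm_sum_le _ _).trans ?_
    refine Finset.sum_le_sum fun n _ => ?_
    rw [norm_mul, norm_pow]
    calc ‖d (n - 1)‖ * ‖z‖ ^ (n - 1)
        ≤ 1 * ‖z‖ ^ (n - 1) :=
          mul_le_mul_of_nonneg_right (hdb _) (by positivity)
      _ = ‖z‖ ^ (n - 1) := one_mul _
  have step2 : (∑ n ∈ Finset.Icc 2 q, ‖z‖ ^ (n - 1))
      < ∑ n ∈ Finset.Icc 2 q, ((1:ℝ)/2) ^ (n - 1) := by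
    refine Finset.sum_lt_sum_of_nonempty (Finset.nonempty_Icc.mpr hq) fun n hn => ?_
    have hn2 : 2 ≤ n := (Finset.mem_Icc.mp hn).1
    refine pow_lt_pow_left₀ ?_ (norm_nonneg z) (by omega)
    simpa using hz
  calc ‖∑ n ∈ Finset.Icc 2 q, d (n - 1) * z ^ (n - 1)‖
      ≤ ∑ n ∈ Finset.Icc 2 q, ‖z‖ ^ (n - 1) := step1
    _ < ∑ n ∈ Finset.Icc 2 q, ((1:ℝ)/2) ^ (n - 1) := step2
    _ ≤ 1 := geo q
end

section
/- If f = h + conj(g) ∈ W⁰_H(α) and p = q ≥ 2, then the partial sum s_{p,p}(f) = s_p(h) + conj(s_p(g)) satisfies the W⁰_H(α) condition on the disk |z| < 1/2; in particular for p = q = 2, Re((s₂(h) + ε s₂(g))'(z) + αz(s₂(h) + ε s₂(g))''(z)) > 0 for all |ε| = 1 and |z| < 1/2. -/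
open Complex Finset Real

lemma bound_of_summable {c : ℕ → ℂ} {ρ : ℝ} (hρ : 0 ≤ ρ)
    (h : Summable (fun n => ‖c n‖ * ρ ^ n)) :
    ∃ C : ℝ, 0 ≤ C ∧ ∀ n, ‖c n‖ * ρ ^ n ≤ C := by
  refine ⟨∑' n, ‖c n‖ * ρ ^ n, tsum_nonneg (fun n => by positivity), fun n => ?_⟩
  exact Summable.le_tsum h n (fun m _ => by positivity)


lemma summable_norm_of_rep {c : ℕ → ℂ}
    (hc : ∀ z : ℂ, ‖z‖ < 1 → Summable (fun n => c n * z ^ n)) :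
    ∀ r : ℝ, 0 ≤ r → r < 1 → Summable (fun n => ‖c n‖ * r ^ n) := by
  intro r hr0 hr1
  set ρ : ℝ := (r + 1) / 2 with hρ
  have hρ1 : ρ < 1 := by simp [hρ]; linarith
  have hρr : r ≤ ρ := by simp [hρ]; linarith
  have hρ0 : 0 ≤ ρ := by positivity
  have h1 : Summable (fun n => c n * (ρ:ℂ) ^ n) := by
    apply hc
    simp [Complex.norm_real, _root_.abs_of_nonneg hρ0]; exact hρ1
  have h2 : Summable (fun n => ‖c n * (ρ:ℂ) ^ n‖) := (summable_norm_iff).2 h1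
  have h3 : Summable (fun n => ‖c n‖ * ρ ^ n) := by
    convert h2 using 2 with n
    simp [norm_mul, norm_pow, Complex.norm_real, _root_.abs_of_nonneg hρ0]
  apply Summable.of_nonneg_of_le (fun n => by positivity) (fun n => ?_) h3
  exact mul_le_mul_of_nonneg_left (pow_le_pow_left₀ hr0 hρr n) (norm_nonneg _)

lemma shift_summable {c : ℕ → ℂ}
    (hc : ∀ r : ℝ, 0 ≤ r → r < 1 → Summable (fun n => ‖c n‖ * r ^ n)) :
    ∀ r : ℝ, 0 ≤ r → r < 1 → Summable (fun n : ℕ => ‖((n:ℂ)+1) * c (n+1)‖ * r ^ n) := by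
  intro r hr0 hr1
  set ρ : ℝ := (r + 1) / 2 with hρdef
  have hρ1 : ρ < 1 := by simp [hρdef]; linarith
  have hρr : r < ρ := by simp [hρdef]; linarith
  have hρ0 : 0 < ρ := by positivity
  clear_value ρ
  have hq1 : r / ρ < 1 := (div_lt_one hρ0).2 hρr
  obtain ⟨C, hC0, hC⟩ := bound_of_summable hρ0.le (hc ρ hρ0.le hρ1)
  have hgeom : Summable (fun n : ℕ => (C / ρ) * (((n:ℝ)+1) * (r/ρ) ^ n)) := by
    apply Summable.mul_left
    have h1 : Summable (fun n : ℕ => (n:ℝ) * (r/ρ) ^ n) := by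
      have := summable_pow_mul_geometric_of_norm_lt_one (R := ℝ) 1 (r := r/ρ) ?_
      · simpa using this
      · rw [Real.norm_of_nonneg (by positivity)]; exact hq1
    have h2 : Summable (fun n : ℕ => (r/ρ) ^ n) :=
      summable_geometric_of_lt_one (by positivity) hq1
    have := h1.add h2
    apply this.congr
    intro n; ring
  apply Summable.of_nonneg_of_le (fun n => by positivity) (fun n => ?_) hgeom
  have hb : ‖c (n+1)‖ ≤ C / ρ ^ (n+1) := by
    rw [le_div_iff₀ (by positivity)]
    exact hC (n+1)
  have hnorm : ‖((n:ℂ)+1) * c (n+1)‖ = ((n:ℝ)+1) * ‖c (n+1)‖ := by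
    rw [norm_mul]
    congr 1
    rw [show ((n:ℂ)+1) = ((((n:ℝ)+1) : ℝ) : ℂ) by push_cast; ring]
    rw [Complex.norm_real, Real.norm_of_nonneg (by positivity)]
  rw [hnorm]
  calc ((n:ℝ)+1) * ‖c (n+1)‖ * r ^ n ≤ ((n:ℝ)+1) * (C / ρ ^ (n+1)) * r ^ n := by
        apply mul_le_mul_of_nonneg_right (mul_le_mul_of_nonneg_left hb (by positivity)) (by positivity)
    _ = (C / ρ) * (((n:ℝ)+1) * (r/ρ) ^ n) := by
        rw [div_pow]
        field_simp
        ring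

lemma hasDerivAt_cpow_series {c : ℕ → ℂ}
    (hc : ∀ r : ℝ, 0 ≤ r → r < 1 → Summable (fun n => ‖c n‖ * r ^ n))
    {z : ℂ} (hz : ‖z‖ < 1) :
    HasDerivAt (fun w => ∑' n, c n * w ^ n)
      (∑' n : ℕ, (((n:ℂ)+1) * c (n+1)) * z ^ n) z := by
  set r : ℝ := (‖z‖ + 1) / 2 with hrdef
  have hr1 : r < 1 := by rw [hrdef]; linarith [hz]
  have hrz : ‖z‖ < r := by rw [hrdef]; linarith [hz]
  have hr0 : 0 < r := by rw [hrdef]; positivity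
  clear_value r
  set ρ : ℝ := (r + 1) / 2 with hρdef
  have hρ1 : ρ < 1 := by rw [hρdef]; linarith
  have hρr : r < ρ := by rw [hρdef]; linarith
  have hρ0 : 0 < ρ := by rw [hρdef]; positivity
  clear_value ρ
  have hq1 : r / ρ < 1 := (div_lt_one hρ0).2 hρr
  obtain ⟨C, hC0, hC⟩ := bound_of_summable hρ0.le (hc ρ hρ0.le hρ1)
  set u : ℕ → ℝ := fun n => (C / r) * ((n:ℝ) * (r/ρ) ^ n) with hu
  have hus : Summable u := by
    apply Summable.mul_left
    have := summable_pow_mul_geometric_of_norm_lt_one (R := ℝ) 1 (r := r/ρ) ?_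
    · simpa using this
    · rw [Real.norm_of_nonneg (by positivity)]; exact hq1
  have hbound : ∀ (n : ℕ) (y : ℂ), ‖y‖ ≤ r → ‖c n * ((n:ℂ) * y ^ (n-1))‖ ≤ u n := by
    intro n y hy
    rw [norm_mul, norm_mul, norm_pow, Complex.norm_natCast]
    have h1 : ‖c n‖ ≤ C / ρ ^ n := by
      rw [le_div_iff₀ (by positivity)]; exact hC n
    calc ‖c n‖ * ((n:ℝ) * ‖y‖ ^ (n-1)) ≤ (C / ρ ^ n) * ((n:ℝ) * r ^ (n-1)) := by
          apply mul_le_mul h1 (mul_le_mul_of_nonneg_left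
            (pow_le_pow_left₀ (norm_nonneg y) hy _) (by positivity)) (by positivity) (by positivity)
      _ ≤ u n := by
          simp only [hu]
          rcases Nat.eq_zero_or_pos n with h | h
          · simp [h]
          · have hn1 : n - 1 + 1 = n := Nat.succ_pred_eq_of_pos h
            apply le_of_eq
            simp only [hu, div_pow]
            rw [show r ^ (n-1) = r ^ n / r from by rw [← hn1, Nat.add_sub_cancel, pow_succ, mul_div_cancel_right₀ _ hr0.ne']]
            field_simp
  have key := hasDerivAt_tsum_of_isPreconnected (g := fun (n : ℕ) (w : ℂ) => c n * w ^ n)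
    (g' := fun (n : ℕ) (w : ℂ) => c n * ((n:ℂ) * w ^ (n-1)))
    hus (Metric.isOpen_ball (x := (0:ℂ)) (ε := r))
    ((convex_ball (0:ℂ) r).isPreconnected)
    (fun n y _ => (hasDerivAt_pow n y).const_mul (c n))
    (fun n y hy => hbound n y (le_of_lt (mem_ball_zero_iff.1 hy)))
    (y₀ := 0) (mem_ball_zero_iff.2 (by simpa using hr0))
    (by apply summable_of_ne_finset_zero (s := {0}); intro n hn; simp at hn
        simp [zero_pow hn])
    (y := z) (mem_ball_zero_iff.2 hrz)
  refine key.congr_deriv (Eq.symm ?_)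
  have hsum : Summable (fun n : ℕ => c n * ((n:ℂ) * z ^ (n-1))) :=
    Summable.of_norm_bounded hus (fun n => hbound n z hrz.le)
  have hg : HasSum (fun n : ℕ => c (n+1) * (((n:ℂ)+1) * z ^ n))
      (∑' n : ℕ, c n * ((n:ℂ) * z ^ (n-1))) := by
    have hfun : (fun n : ℕ => c (n+1) * (((n:ℂ)+1) * z ^ n))
        = fun n : ℕ => c (n+1) * ((((n+1:ℕ)):ℂ) * z ^ ((n+1)-1)) := by
      funext n; push_cast; ring
    rw [hfun]
    refine (hasSum_nat_add_iff (f := fun n : ℕ => c n * ((n:ℂ) * z ^ (n-1))) 1).2 ?_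
    simpa using hsum.hasSum
  rw [show (fun n : ℕ => (((n:ℂ)+1) * c (n+1)) * z ^ n)
      = (fun n : ℕ => c (n+1) * (((n:ℂ)+1) * z ^ n)) from funext (fun n => by ring)]
  exact hg.tsum_eq

lemma deriv_rep {c : ℕ → ℂ} {u : ℂ → ℂ} (α : ℝ)
    (hrep : ∀ z : ℂ, ‖z‖ < 1 → HasSum (fun n => c n * z ^ n) (u z)) :
    ∀ z : ℂ, ‖z‖ < 1 → HasSum (fun n : ℕ => (((n:ℂ)+1) * (1 + (α:ℂ) * n) * c (n+1)) * z ^ n)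
      (deriv u z + (α:ℂ) * z * deriv (deriv u) z) := by
  have hc : ∀ r : ℝ, 0 ≤ r → r < 1 → Summable (fun n => ‖c n‖ * r ^ n) :=
    summable_norm_of_rep (fun z hz => (hrep z hz).summable)
  set c1 : ℕ → ℂ := fun n => ((n:ℂ)+1) * c (n+1) with hc1def
  have hc1 : ∀ r : ℝ, 0 ≤ r → r < 1 → Summable (fun n => ‖c1 n‖ * r ^ n) := shift_summable hc
  set c2 : ℕ → ℂ := fun n => ((n:ℂ)+1) * c1 (n+1) with hc2def
  have hc2 : ∀ r : ℝ, 0 ≤ r → r < 1 → Summable (fun n => ‖c2 n‖ * r ^ n) := shift_summable hc1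
  set F : ℂ → ℂ := fun w => ∑' n, c n * w ^ n with hF
  set F1 : ℂ → ℂ := fun w => ∑' n, c1 n * w ^ n with hF1
  set F2 : ℂ → ℂ := fun w => ∑' n, c2 n * w ^ n with hF2
  have hdF : ∀ w : ℂ, ‖w‖ < 1 → HasDerivAt F (F1 w) w := fun w hw => hasDerivAt_cpow_series hc hw
  have hdF1 : ∀ w : ℂ, ‖w‖ < 1 → HasDerivAt F1 (F2 w) w := fun w hw => hasDerivAt_cpow_series hc1 hw
  have huF : ∀ w : ℂ, ‖w‖ < 1 → u w = F w := fun w hw => ((hrep w hw).tsum_eq).symm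
  intro z hz
  have hball : Metric.ball (0:ℂ) 1 ∈ nhds z := by
    apply Metric.isOpen_ball.mem_nhds
    simpa [mem_ball_zero_iff] using hz
  have hequF : u =ᶠ[nhds z] F := Filter.eventuallyEq_of_mem hball
    (fun w hw => huF w (mem_ball_zero_iff.1 hw))
  -- deriv u agrees with F1 on the ball
  have hderiv_u : ∀ w : ℂ, ‖w‖ < 1 → deriv u w = F1 w := by
    intro w hw
    have hb : Metric.ball (0:ℂ) 1 ∈ nhds w := by
      apply Metric.isOpen_ball.mem_nhds
      simpa [mem_ball_zero_iff] using hw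
    have he : u =ᶠ[nhds w] F := Filter.eventuallyEq_of_mem hb
      (fun y hy => huF y (mem_ball_zero_iff.1 hy))
    rw [he.deriv_eq]
    exact (hdF w hw).deriv
  have hderiv2 : deriv (deriv u) z = F2 z := by
    have he : deriv u =ᶠ[nhds z] F1 := Filter.eventuallyEq_of_mem hball
      (fun y hy => hderiv_u y (mem_ball_zero_iff.1 hy))
    rw [he.deriv_eq]
    exact (hdF1 z hz).deriv
  rw [hderiv_u z hz, hderiv2]
  -- now identify the sums
  have hsum1 : Summable (fun n : ℕ => c1 n * z ^ n) := by
    apply Summable.of_norm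
    have := hc1 ‖z‖ (norm_nonneg z) hz
    simpa [norm_mul, norm_pow] using this
  have hs1 : HasSum (fun n : ℕ => c1 n * z ^ n) (F1 z) := hsum1.hasSum
  have hsum2 : Summable (fun n : ℕ => c2 n * z ^ n) := by
    apply Summable.of_norm
    have := hc2 ‖z‖ (norm_nonneg z) hz
    simpa [norm_mul, norm_pow] using this
  have hs2 : HasSum (fun n : ℕ => c2 n * z ^ n) (F2 z) := hsum2.hasSum
  have he : HasSum (fun n : ℕ => ((α:ℂ)*z) * (c2 n * z ^ n)) ((α:ℂ)*z*(F2 z)) := by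
    simpa [mul_assoc] using hs2.mul_left ((α:ℂ)*z)
  set G : ℕ → ℂ := fun n => ((α:ℂ) * n * ((n:ℂ)+1) * c (n+1)) * z ^ n with hG
  have hfun : (fun n : ℕ => ((α:ℂ)*z) * (c2 n * z ^ n)) = fun m : ℕ => G (m+1) := by
    funext m
    simp only [hG, hc2def, hc1def]
    push_cast
    ring
  rw [hfun] at he
  have he2 : HasSum G ((α:ℂ)*z*(F2 z)) := by
    have := (hasSum_nat_add_iff (f := G) 1).1 he
    simpa [hG] using this
  have hfin := hs1.add he2
  convert hfin using 1
  funext n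
  simp only [hc1def, hG]
  ring

lemma elem_integral (t : ℤ) :
    (∫ θ in (0:ℝ)..(2*π), Complex.exp ((t:ℂ)*θ*Complex.I))
      = if t = 0 then ((2*π:ℝ):ℂ) else 0 := by
  rcases eq_or_ne t 0 with ht | ht
  · simp [ht]
  · rw [if_neg ht]
    have harg : ∀ θ:ℝ, (t:ℂ)*θ*Complex.I = ((t:ℂ)*Complex.I)*θ := fun θ => by ring
    simp_rw [harg]
    rw [integral_exp_mul_complex (by simp [ht, Complex.I_ne_zero])]
    have h2 : Complex.exp ((t:ℂ)*Complex.I*((2*π:ℝ):ℂ)) = 1 := by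
      rw [show (t:ℂ)*Complex.I*((2*π:ℝ):ℂ) = (t:ℂ)*(2*(π:ℝ)*Complex.I) by push_cast; ring]
      exact Complex.exp_int_mul_two_pi_mul_I t
    rw [h2]
    simp

lemma kernel_pos {w : ℂ} (hw : ‖w‖ < 1/2) {p : ℕ} (hp : 2 ≤ p) :
    0 < 2*(∑ n ∈ Finset.range p, w^n).re - 1 := by
  set M : ℂ := 2*(∑ n ∈ Finset.range p, w^n) - 1 with hM
  have hgoal : 2*(∑ n ∈ Finset.range p, w^n).re - 1 = M.re := by
    simp [hM]
  rw [hgoal]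
  have hMw : M * (1 - w) = 1 + w - 2*w^p := by
    have := geom_sum_mul w p
    rw [hM]
    linear_combination (-2 : ℂ) * this
  have hkey : M.re * Complex.normSq (1-w) = ((1 + w - 2*w^p) * (starRingEnd ℂ) (1-w)).re := by
    rw [← hMw]
    simp only [Complex.mul_re, Complex.mul_im, Complex.sub_re, Complex.sub_im, Complex.one_re,
      Complex.one_im, Complex.conj_re, Complex.conj_im, Complex.normSq_apply]
    ring
  have hw1 : w ≠ 1 := by
    intro hh; rw [hh] at hw; norm_num at hw
  have hnsq : 0 < Complex.normSq (1-w) := by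
    rw [Complex.normSq_pos]; intro hh
    apply hw1; linear_combination -hh
  have hexp : ((1 + w - 2*w^p) * (starRingEnd ℂ) (1-w)).re
      = 1 - Complex.normSq w - (2*w^p*((starRingEnd ℂ) (1-w))).re := by
    have h1 : (1 + w - 2*w^p) * (starRingEnd ℂ) (1-w)
        = (1 - w * (starRingEnd ℂ) w) + (w - (starRingEnd ℂ) w) - 2*w^p*((starRingEnd ℂ) (1-w)) := by
      simp only [map_sub, map_one]
      ring
    rw [h1]
    simp only [Complex.sub_re, Complex.add_re, Complex.mul_re, Complex.one_re, Complex.one_im,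
      Complex.conj_re, Complex.conj_im, Complex.normSq_apply]
    ring
  rw [hexp] at hkey
  have hconj : ‖(starRingEnd ℂ) (1-w)‖ = ‖1-w‖ := RCLike.norm_conj _
  have habs : |(2*w^p*((starRingEnd ℂ) (1-w))).re| ≤ 2*‖w‖^p*(1+‖w‖) := by
    refine le_trans (Complex.abs_re_le_norm _) ?_
    rw [norm_mul, norm_mul, norm_pow, hconj]
    have h2 : ‖(2:ℂ)‖ = 2 := by simp
    rw [h2]
    gcongr
    exact le_trans (norm_sub_le 1 w) (by simp)
  have hr0 : (0:ℝ) ≤ ‖w‖ := norm_nonneg w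
  have hrp : ‖w‖^p ≤ ‖w‖^2 := pow_le_pow_of_le_one hr0 (by linarith) hp
  have hnsqw : Complex.normSq w = ‖w‖^2 := by
    rw [Complex.normSq_eq_norm_sq]
  have hpos : 0 < M.re * Complex.normSq (1-w) := by
    rw [hkey, hnsqw]
    nlinarith [abs_le.1 habs, hrp, hr0, hw, pow_nonneg hr0 p]
  nlinarith [hnsq, hpos]

lemma core {c : ℕ → ℂ} {Φ : ℂ → ℂ}
    (hΦ : ∀ z : ℂ, ‖z‖ < 1 → HasSum (fun n => c n * z ^ n) (Φ z))
    (hpos : ∀ z : ℂ, ‖z‖ < 1 → 0 < (Φ z).re)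
    {p : ℕ} (hp : 2 ≤ p) {z : ℂ} (hz : ‖z‖ < 1/2) :
    0 < (∑ n ∈ Finset.range p, c n * z ^ n).re := by
  have hc : ∀ r : ℝ, 0 ≤ r → r < 1 → Summable (fun n => ‖c n‖ * r ^ n) :=
    summable_norm_of_rep (fun w hw => (hΦ w hw).summable)
  set ρ : ℝ := ‖z‖ + 1/2 with hρdef
  have hρ0 : 0 < ρ := by rw [hρdef]; positivity
  have hρ1 : ρ < 1 := by rw [hρdef]; linarith
  have hzρ : ‖z‖ / ρ < 1/2 := by
    rw [div_lt_iff₀ hρ0, hρdef]; linarith [norm_nonneg z]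
  clear_value ρ
  have h2π : (0:ℝ) < 2*π := by positivity
  set γ : ℝ → ℂ := fun θ => (ρ:ℂ) * Complex.exp (θ * Complex.I) with hγ
  have hγn : ∀ θ : ℝ, ‖γ θ‖ = ρ := by
    intro θ
    rw [hγ]
    simp [Complex.norm_exp_ofReal_mul_I, _root_.abs_of_pos hρ0]
  have hγ1 : ∀ θ : ℝ, ‖γ θ‖ < 1 := fun θ => by rw [hγn]; exact hρ1
  have hγcont : Continuous γ := by
    rw [hγ]; fun_prop
  have hΦca : ∀ w : ℂ, ‖w‖ < 1 → ContinuousAt Φ w := by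
    intro w hw
    have hd := (hasDerivAt_cpow_series hc hw).differentiableAt.continuousAt
    apply hd.congr
    have hball : Metric.ball (0:ℂ) 1 ∈ nhds w := by
      apply Metric.isOpen_ball.mem_nhds
      simpa [mem_ball_zero_iff] using hw
    exact Filter.eventuallyEq_of_mem hball
      (fun y hy => (hΦ y (mem_ball_zero_iff.1 hy)).tsum_eq)
  have hΦcont : Continuous (fun θ : ℝ => Φ (γ θ)) :=
    continuous_iff_continuousAt.2 fun θ =>
      ((hΦca (γ θ) (hγ1 θ)).comp hγcont.continuousAt)
  -- orthogonality relations
  have horth : ∀ m : ℤ, (∫ θ in Set.Ioc (0:ℝ) (2*π), Φ (γ θ) * Complex.exp ((m:ℂ)*θ*Complex.I))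
      = if 0 ≤ -m then ((2*π:ℝ):ℂ) * (c (-m).toNat * (ρ:ℂ)^((-m).toNat)) else 0 := by
    intro m
    set Fk : ℕ → ℝ → ℂ := fun k θ => c k * (ρ:ℂ)^k * Complex.exp (((k:ℂ)+m)*θ*Complex.I) with hFk
    have hptw : ∀ θ : ℝ, HasSum (fun k => Fk k θ)
        (Φ (γ θ) * Complex.exp ((m:ℂ)*θ*Complex.I)) := by
      intro θ
      have h1 := (hΦ (γ θ) (hγ1 θ)).mul_right (Complex.exp ((m:ℂ)*θ*Complex.I))
      have h2 : (fun k : ℕ => c k * (γ θ)^k * Complex.exp ((m:ℂ)*θ*Complex.I))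
          = fun k => Fk k θ := by
        funext k
        calc c k * (γ θ)^k * Complex.exp ((m:ℂ)*θ*Complex.I)
            = c k * (ρ:ℂ)^k * (Complex.exp ((k:ℕ)*(θ*Complex.I)) * Complex.exp ((m:ℂ)*θ*Complex.I)) := by
              rw [hγ, mul_pow, ← Complex.exp_nat_mul]; ring
          _ = c k * (ρ:ℂ)^k * Complex.exp ((k:ℕ)*(θ*Complex.I) + (m:ℂ)*θ*Complex.I) := by
              rw [Complex.exp_add]
          _ = Fk k θ := by
              rw [hFk]
              rw [show ((k:ℕ):ℂ)*(θ*Complex.I) + (m:ℂ)*θ*Complex.I = ((k:ℂ)+m)*θ*Complex.I from by push_cast; ring]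
      rwa [h2] at h1
    have hFkcont : ∀ k, Continuous (Fk k) := by
      intro k; rw [hFk]; fun_prop
    have hFkint : ∀ k, MeasureTheory.IntegrableOn (Fk k) (Set.Ioc (0:ℝ) (2*π)) := by
      intro k
      exact (hFkcont k).integrableOn_Ioc
    have hnorm : ∀ k θ, ‖Fk k θ‖ = ‖c k‖ * ρ^k := by
      intro k θ
      rw [hFk]
      have harg : ((k:ℂ)+m)*θ*Complex.I = ((((((k:ℤ)+m):ℤ):ℝ)*θ :ℝ):ℂ)*Complex.I := by
        push_cast; ring
      rw [norm_mul, norm_mul, norm_pow, harg]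
      rw [Complex.norm_exp_ofReal_mul_I]
      rw [Complex.norm_real, Real.norm_of_nonneg hρ0.le]
      ring
    have hintnorm : ∀ k, (∫ θ in Set.Ioc (0:ℝ) (2*π), ‖Fk k θ‖) = (‖c k‖ * ρ^k) * (2*π) := by
      intro k
      simp_rw [hnorm]
      rw [MeasureTheory.setIntegral_const]
      rw [Real.volume_real_Ioc_of_le (by linarith), smul_eq_mul]
      rw [sub_zero]
      ring
    have hsumm : Summable (fun k => ∫ θ in Set.Ioc (0:ℝ) (2*π), ‖Fk k θ‖) := by
      simp only [hintnorm]
      exact (hc ρ hρ0.le hρ1).mul_right _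
    have hkey := MeasureTheory.hasSum_integral_of_summable_integral_norm hFkint hsumm
    have hts : (fun θ : ℝ => ∑' k, Fk k θ)
        = fun θ => Φ (γ θ) * Complex.exp ((m:ℂ)*θ*Complex.I) :=
      funext fun θ => (hptw θ).tsum_eq
    rw [hts] at hkey
    have hterm : ∀ k : ℕ, (∫ θ in Set.Ioc (0:ℝ) (2*π), Fk k θ)
        = if (k:ℤ) + m = 0 then c k * (ρ:ℂ)^k * ((2*π:ℝ):ℂ) else 0 := by
      intro k
      have h1 : (∫ θ in Set.Ioc (0:ℝ) (2*π), Fk k θ)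
          = c k * (ρ:ℂ)^k * ∫ θ in Set.Ioc (0:ℝ) (2*π), Complex.exp (((k:ℂ)+m)*θ*Complex.I) := by
        rw [hFk]
        exact MeasureTheory.integral_const_mul _ _
      have h2 : (∫ θ in Set.Ioc (0:ℝ) (2*π), Complex.exp (((k:ℂ)+m)*θ*Complex.I))
          = ∫ θ in (0:ℝ)..(2*π), Complex.exp (((k:ℂ)+m)*θ*Complex.I) :=
        (intervalIntegral.integral_of_le (by linarith)).symm
      have h3 : ∀ θ:ℝ, ((k:ℂ)+m)*θ*Complex.I = ((((k:ℤ)+m :ℤ):ℂ))*θ*Complex.I := by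
        intro θ; push_cast; ring
      rw [h1, h2]
      simp_rw [h3]
      rw [elem_integral ((k:ℤ)+m)]
      by_cases hkm : (k:ℤ) + m = 0
      · rw [if_pos hkm, if_pos hkm]
      · rw [if_neg hkm, if_neg hkm]; ring
    by_cases hm : 0 ≤ -m
    · rw [if_pos hm]
      set k0 : ℕ := (-m).toNat with hk0
      have hfun : (fun k : ℕ => ∫ θ in Set.Ioc (0:ℝ) (2*π), Fk k θ)
          = fun k => if k = k0 then c k0 * (ρ:ℂ)^k0 * ((2*π:ℝ):ℂ) else 0 := by
        funext k
        rw [hterm k]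
        by_cases hk : k = k0
        · rw [if_pos (by omega), if_pos hk, hk]
        · rw [if_neg (by omega), if_neg hk]
      rw [hfun] at hkey
      have := (hasSum_ite_eq k0 (c k0 * (ρ:ℂ)^k0 * ((2*π:ℝ):ℂ))).unique hkey
      rw [← this]
      ring
    · rw [if_neg hm]
      have hfun : (fun k : ℕ => ∫ θ in Set.Ioc (0:ℝ) (2*π), Fk k θ) = fun _ => (0:ℂ) := by
        funext k
        rw [hterm k, if_neg (by omega)]
      rw [hfun] at hkey
      exact (hasSum_zero.unique hkey).symm
  -- now the kernel computation
  set w : ℝ → ℂ := fun θ => (z/(ρ:ℂ)) * Complex.exp (-(θ*Complex.I)) with hw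
  have hwnorm : ∀ θ : ℝ, ‖w θ‖ = ‖z‖/ρ := by
    intro θ
    simp only [hw]
    rw [show -((θ:ℂ)*Complex.I) = (((-θ:ℝ)):ℂ)*Complex.I from by push_cast; ring]
    rw [norm_mul, Complex.norm_exp_ofReal_mul_I]
    rw [norm_div, Complex.norm_real, Real.norm_of_nonneg hρ0.le]
    ring
  set S : ℝ → ℂ := fun θ => ∑ n ∈ Finset.range p, (w θ)^n with hS
  have hScont : Continuous S := by
    simp only [hS]
    apply continuous_finset_sum
    intro n _
    apply Continuous.pow
    simp only [hw]; fun_prop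
  have hwcont : Continuous w := by rw [hw]; fun_prop
  -- A-type integrals
  have hA : ∀ n : ℕ, (∫ θ in Set.Ioc (0:ℝ) (2*π), Φ (γ θ) * (w θ)^n)
      = ((2*π:ℝ):ℂ) * (c n * z^n) := by
    intro n
    have h1 : ∀ θ:ℝ, Φ (γ θ) * (w θ)^n
        = (z/(ρ:ℂ))^n * (Φ (γ θ) * Complex.exp ((((-n:ℤ)):ℂ)*θ*Complex.I)) := by
      intro θ
      simp only [hw]
      rw [mul_pow, ← Complex.exp_nat_mul]
      rw [show ((n:ℕ):ℂ) * -((θ:ℂ)*Complex.I) = (((-n:ℤ)):ℂ)*θ*Complex.I from by push_cast; ring]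
      ring
    simp_rw [h1]
    rw [MeasureTheory.integral_const_mul, horth (-(n:ℤ))]
    rw [if_pos (by omega : (0:ℤ) ≤ -(-(n:ℤ)))]
    rw [show ((-(-(n:ℤ))).toNat) = n from by omega]
    rw [div_pow]
    have hρn : ((ρ:ℂ))^n ≠ 0 := pow_ne_zero n (by
      simpa using Complex.ofReal_ne_zero.2 hρ0.ne')
    field_simp
  -- B-type integrals
  have hB : ∀ n : ℕ, 1 ≤ n → (∫ θ in Set.Ioc (0:ℝ) (2*π), Φ (γ θ) * ((starRingEnd ℂ) (w θ))^n)
      = 0 := by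
    intro n hn
    have h1 : ∀ θ:ℝ, Φ (γ θ) * ((starRingEnd ℂ) (w θ))^n
        = ((starRingEnd ℂ) (z/(ρ:ℂ)))^n * (Φ (γ θ) * Complex.exp ((((n:ℤ)):ℂ)*θ*Complex.I)) := by
      intro θ
      simp only [hw]
      rw [map_mul, mul_pow]
      rw [show (starRingEnd ℂ) (Complex.exp (-((θ:ℂ)*Complex.I))) = Complex.exp ((θ:ℂ)*Complex.I) from by
        rw [← Complex.exp_conj]
        congr 1
        simp]
      rw [← Complex.exp_nat_mul]
      rw [show ((n:ℕ):ℂ) * ((θ:ℂ)*Complex.I) = (((n:ℤ)):ℂ)*θ*Complex.I from by push_cast; ring]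
      ring
    simp_rw [h1]
    rw [MeasureTheory.integral_const_mul, horth (n:ℤ)]
    rw [if_neg (by omega)]
    ring
  -- constant integral
  have hB0 : (∫ θ in Set.Ioc (0:ℝ) (2*π), Φ (γ θ)) = ((2*π:ℝ):ℂ) * c 0 := by
    have := horth 0
    simp only [Int.neg_zero, le_refl, if_pos, Int.toNat_zero, pow_zero, mul_one,
      Int.cast_zero, zero_mul, Complex.exp_zero] at this
    simpa using this
  -- integrability
  have hIoc : ∀ (f : ℝ → ℂ), Continuous f →
      MeasureTheory.IntegrableOn (fun θ => Φ (γ θ) * f θ) (Set.Ioc (0:ℝ) (2*π)) := by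
    intro f hf
    exact (hΦcont.mul hf).integrableOn_Ioc
  -- main identity
  have hi1 := hIoc S hScont
  have hi2 : MeasureTheory.IntegrableOn (fun θ => Φ (γ θ) * (starRingEnd ℂ) (S θ))
      (Set.Ioc (0:ℝ) (2*π)) := hIoc (fun θ => (starRingEnd ℂ) (S θ)) (continuous_star.comp hScont)
  have hi3 : MeasureTheory.IntegrableOn (fun θ => Φ (γ θ)) (Set.Ioc (0:ℝ) (2*π)) := by
    have := hIoc (fun _ => (1:ℂ)) continuous_const
    simpa using this
  have hint1 : (∫ θ in Set.Ioc (0:ℝ) (2*π), Φ (γ θ) * S θ)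
      = ((2*π:ℝ):ℂ) * ∑ n ∈ Finset.range p, c n * z^n := by
    have h1 : ∀ θ:ℝ, Φ (γ θ) * S θ = ∑ n ∈ Finset.range p, Φ (γ θ) * (w θ)^n := by
      intro θ; simp only [hS]; rw [Finset.mul_sum]
    simp_rw [h1]
    rw [MeasureTheory.integral_finset_sum _ (fun n _ => hIoc (fun θ => (w θ)^n) (hwcont.pow n))]
    rw [Finset.mul_sum]
    exact Finset.sum_congr rfl (fun n _ => hA n)
  have hint2 : (∫ θ in Set.Ioc (0:ℝ) (2*π), Φ (γ θ) * (starRingEnd ℂ) (S θ))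
      = ((2*π:ℝ):ℂ) * c 0 := by
    have h1 : ∀ θ:ℝ, Φ (γ θ) * (starRingEnd ℂ) (S θ)
        = ∑ n ∈ Finset.range p, Φ (γ θ) * ((starRingEnd ℂ) (w θ))^n := by
      intro θ
      simp only [hS, map_sum, map_pow]
      rw [Finset.mul_sum]
    simp_rw [h1]
    rw [MeasureTheory.integral_finset_sum _ (fun n _ =>
      hIoc (fun θ => ((starRingEnd ℂ) (w θ))^n) ((continuous_star.comp hwcont).pow n))]
    rw [Finset.sum_eq_single 0]
    · simp only [pow_zero, mul_one]
      exact hB0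
    · intro n _ hn
      exact hB n (by omega)
    · intro hn
      exact absurd (Finset.mem_range.2 (by omega)) hn
  have hint3 : (∫ θ in Set.Ioc (0:ℝ) (2*π), Φ (γ θ) * (S θ + (starRingEnd ℂ) (S θ) - 1))
      = ((2*π:ℝ):ℂ) * ∑ n ∈ Finset.range p, c n * z^n := by
    have h1 : (fun θ:ℝ => Φ (γ θ) * (S θ + (starRingEnd ℂ) (S θ) - 1))
        = fun θ:ℝ => (Φ (γ θ) * S θ + Φ (γ θ) * (starRingEnd ℂ) (S θ)) - Φ (γ θ) := by
      funext θ; ring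
    rw [h1]
    have hi12 : MeasureTheory.IntegrableOn
        (fun θ => Φ (γ θ) * S θ + Φ (γ θ) * (starRingEnd ℂ) (S θ)) (Set.Ioc (0:ℝ) (2*π)) :=
      hi1.add hi2
    rw [MeasureTheory.integral_sub hi12 hi3]
    rw [MeasureTheory.integral_add hi1 hi2]
    rw [hint1, hint2, hB0]
    ring
  -- positivity
  have hKpos : ∀ θ : ℝ, 0 < 2*(S θ).re - 1 := by
    intro θ
    simp only [hS]
    apply kernel_pos _ hp
    rw [hwnorm θ]
    exact hzρ
  have hreal : ∀ θ : ℝ, S θ + (starRingEnd ℂ) (S θ) - 1 = (((2*(S θ).re - 1 : ℝ)):ℂ) := by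
    intro θ
    rw [Complex.add_conj]
    push_cast
    ring
  have hK : MeasureTheory.IntegrableOn (fun θ => Φ (γ θ) * (S θ + (starRingEnd ℂ) (S θ) - 1))
      (Set.Ioc (0:ℝ) (2*π)) :=
    hIoc _ ((hScont.add (continuous_star.comp hScont)).sub continuous_const)
  have hre : (((2*π:ℝ):ℂ) * ∑ n ∈ Finset.range p, c n * z^n).re
      = ∫ θ in Set.Ioc (0:ℝ) (2*π), (Φ (γ θ)).re * (2*(S θ).re - 1) := by
    rw [← hint3]
    have h2 := integral_re hK
    simp only [RCLike.re_to_complex] at h2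
    rw [← h2]
    apply MeasureTheory.integral_congr_ae
    apply Filter.Eventually.of_forall
    intro θ
    show (Φ (γ θ) * (S θ + (starRingEnd ℂ) (S θ) - 1)).re = (Φ (γ θ)).re * (2*(S θ).re - 1)
    rw [hreal θ]
    simp [Complex.mul_re]
  have hposint : 0 < ∫ θ in Set.Ioc (0:ℝ) (2*π), (Φ (γ θ)).re * (2*(S θ).re - 1) := by
    rw [← intervalIntegral.integral_of_le (le_of_lt h2π)]
    apply intervalIntegral.intervalIntegral_pos_of_pos_on
    · apply Continuous.intervalIntegrable
      exact (Complex.continuous_re.comp hΦcont).mul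
        ((continuous_const.mul (Complex.continuous_re.comp hScont)).sub continuous_const)
    · intro x _
      exact mul_pos (hpos (γ x) (hγ1 x)) (hKpos x)
    · exact h2π
  have hfinal : 0 < (((2*π:ℝ):ℂ) * ∑ n ∈ Finset.range p, c n * z^n).re := by
    rw [hre]; exact hposint
  rw [Complex.re_ofReal_mul] at hfinal
  nlinarith [hfinal, h2π, sq_nonneg ((∑ n ∈ Finset.range p, c n * z^n).re)]

lemma poly_deriv (d : ℕ → ℂ) (p : ℕ) (α : ℝ) (z : ℂ) :
    deriv (fun w : ℂ => ∑ n ∈ Finset.Icc 1 p, d n * w ^ n) z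
      + (α:ℂ) * z * deriv (deriv (fun w : ℂ => ∑ n ∈ Finset.Icc 1 p, d n * w ^ n)) z
    = ∑ n ∈ Finset.range p, (((n:ℂ)+1) * (1 + (α:ℂ)*(n:ℂ)) * d (n+1)) * z ^ n := by
  have h1 : deriv (fun w : ℂ => ∑ n ∈ Finset.Icc 1 p, d n * w ^ n)
      = fun y : ℂ => ∑ n ∈ Finset.Icc 1 p, d n * ((n:ℂ) * y ^ (n-1)) := by
    funext y
    apply HasDerivAt.deriv
    apply HasDerivAt.fun_sum
    intro n _
    exact (hasDerivAt_pow n y).const_mul (d n)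
  have h2 : deriv (deriv (fun w : ℂ => ∑ n ∈ Finset.Icc 1 p, d n * w ^ n)) z
      = ∑ n ∈ Finset.Icc 1 p, d n * ((n:ℂ) * (((n-1:ℕ):ℂ) * z ^ (n-1-1))) := by
    rw [h1]
    apply HasDerivAt.deriv
    apply HasDerivAt.fun_sum
    intro n _
    have := ((hasDerivAt_pow (n-1) z).const_mul ((n:ℂ))).const_mul (d n)
    convert this using 1
  rw [h2]
  rw [show deriv (fun w : ℂ => ∑ n ∈ Finset.Icc 1 p, d n * w ^ n) z
      = ∑ n ∈ Finset.Icc 1 p, d n * ((n:ℂ) * z ^ (n-1)) from by rw [h1]]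
  rw [Finset.mul_sum, ← Finset.sum_add_distrib]
  rw [show Finset.Icc 1 p = Finset.Ico 1 (p+1) from by rw [Finset.Ico_add_one_right_eq_Icc]]
  rw [Finset.sum_Ico_eq_sum_range]
  simp only [Nat.add_sub_cancel_left, Nat.add_sub_cancel]
  apply Finset.sum_congr (by simp)
  intro i _
  rcases i with _ | j
  · norm_num
  · have hj2 : (1 + (j+1)) = j + 2 := by omega
    have hj3 : (j + 1 : ℕ) - 1 = j := by omega
    rw [hj2, hj3]
    push_cast
    rw [pow_succ]
    ring


/-- for f ∈ W⁰_H(α) and p = q ≥ 2, the section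
s_{p,p}(f) = s_p(h) + conj(s_p(g)) satisfies the W⁰_H(α) condition for |z| < 1/2. -/
theorem stmt_16 (α : ℝ) (hα : 0 ≤ α) (a b : ℕ → ℂ) (h g : ℂ → ℂ)
    (ha0 : a 0 = 0) (ha1 : a 1 = 1) (hb0 : b 0 = 0) (hb1 : b 1 = 0)
    (hrep : ∀ z ∈ Metric.ball (0 : ℂ) 1, HasSum (fun n => a n * z ^ n) (h z))
    (grep : ∀ z ∈ Metric.ball (0 : ℂ) 1, HasSum (fun n => b n * z ^ n) (g z))
    (hf : ∀ z ∈ Metric.ball (0 : ℂ) 1,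
        ‖deriv g z + (α : ℂ) * z * deriv (deriv g) z‖
          < (deriv h z + (α : ℂ) * z * deriv (deriv h) z).re)
    (p : ℕ) (hp : 2 ≤ p) :
    ∀ z : ℂ, ‖z‖ < 1 / 2 →
      ‖deriv (fun w : ℂ => ∑ n ∈ Finset.Icc 1 p, b n * w ^ n) z
          + (α : ℂ) * z *
            deriv (deriv (fun w : ℂ => ∑ n ∈ Finset.Icc 1 p, b n * w ^ n)) z‖
        < (deriv (fun w : ℂ => ∑ n ∈ Finset.Icc 1 p, a n * w ^ n) z
          + (α : ℂ) * z *
            deriv (deriv (fun w : ℂ => ∑ n ∈ Finset.Icc 1 p, a n * w ^ n)) z).re := by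
  intro z hz
  have hz' : ‖z‖ < 1/2 := by exact hz
  rw [poly_deriv a p α z, poly_deriv b p α z]
  set SA : ℂ := ∑ n ∈ Finset.range p, (((n:ℂ)+1) * (1 + (α:ℂ)*(n:ℂ)) * a (n+1)) * z ^ n with hSA
  set SB : ℂ := ∑ n ∈ Finset.range p, (((n:ℂ)+1) * (1 + (α:ℂ)*(n:ℂ)) * b (n+1)) * z ^ n with hSB
  have hrep' : ∀ w : ℂ, ‖w‖ < 1 → HasSum (fun n => a n * w ^ n) (h w) :=
    fun w hw => hrep w (mem_ball_zero_iff.2 hw)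
  have grep' : ∀ w : ℂ, ‖w‖ < 1 → HasSum (fun n => b n * w ^ n) (g w) :=
    fun w hw => grep w (mem_ball_zero_iff.2 hw)
  have hDA := deriv_rep α hrep'
  have hDB := deriv_rep α grep'
  have hmain : ∀ ε : ℂ, ‖ε‖ = 1 → 0 < (SA + ε * SB).re := by
    intro ε hε
    have hΦ : ∀ w : ℂ, ‖w‖ < 1 →
        HasSum (fun n : ℕ => ((((n:ℂ)+1) * (1 + (α:ℂ)*(n:ℂ)) * (a (n+1) + ε * b (n+1)))) * w ^ n)
          ((deriv h w + (α:ℂ) * w * deriv (deriv h) w)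
            + ε * (deriv g w + (α:ℂ) * w * deriv (deriv g) w)) := by
      intro w hw
      have := (hDA w hw).add ((hDB w hw).mul_left ε)
      convert this using 1
      funext n
      ring
    have hpos : ∀ w : ℂ, ‖w‖ < 1 →
        0 < ((deriv h w + (α:ℂ) * w * deriv (deriv h) w)
            + ε * (deriv g w + (α:ℂ) * w * deriv (deriv g) w)).re := by
      intro w hw
      rw [Complex.add_re]
      have h1 := hf w (mem_ball_zero_iff.2 hw)
      have h2 := Complex.abs_re_le_norm (ε * (deriv g w + (α:ℂ) * w * deriv (deriv g) w))
      rw [norm_mul, hε, one_mul] at h2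
      have h3 := neg_abs_le ((ε * (deriv g w + (α:ℂ) * w * deriv (deriv g) w)).re)
      have h4 := abs_le.1 h2
      linarith [h4.1, h4.2]
    have hcore := core hΦ hpos hp hz'
    have : (∑ n ∈ Finset.range p,
        ((((n:ℂ)+1) * (1 + (α:ℂ)*(n:ℂ)) * (a (n+1) + ε * b (n+1)))) * z ^ n) = SA + ε * SB := by
      rw [hSA, hSB, Finset.mul_sum, ← Finset.sum_add_distrib]
      apply Finset.sum_congr rfl
      intro n _
      ring
    rwa [this] at hcore
  by_cases hsb : SB = 0
  · rw [hsb]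
    have := hmain 1 (by simp)
    rw [hsb] at this
    simpa using this
  · set ε : ℂ := -((‖SB‖ : ℝ) : ℂ) / SB with hε
    have hεabs : ‖ε‖ = 1 := by
      rw [hε, norm_div, norm_neg]
      rw [Complex.norm_real, Real.norm_of_nonneg (norm_nonneg SB)]
      exact div_self (fun hh => hsb (by simpa using hh))
    have hεSB : ε * SB = -((‖SB‖ : ℝ) : ℂ) := by
      rw [hε, div_mul_cancel₀ _ hsb]
    have := hmain ε hεabs
    rw [hεSB] at this
    rw [Complex.add_re] at this
    simp only [Complex.neg_re, Complex.ofReal_re] at this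
    linarith
end

section
/- If 0 ≤ β < α, then W⁰_H(α) ⊂ W⁰_H(β): every harmonic f = h + conj(g) satisfying Re(h'(z) + αz h''(z)) > |g'(z) + αz g''(z)| on the unit disk also satisfies Re(h'(z) + βz h''(z)) > |g'(z) + βz g''(z)| on the unit disk. -/
open Metric Set intervalIntegral
set_option maxHeartbeats 1000000
private lemma rep_integral (α : ℝ) (hα : 0 < α) (φ : ℂ → ℂ)
    (hφ : AnalyticOnNhd ℂ φ (Metric.ball 0 1)) (z : ℂ) (hz : z ∈ Metric.ball (0:ℂ) 1) :
    φ z = ∫ s in (0:ℝ)..1,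
      (φ (((s ^ α : ℝ) : ℂ) * z)
        + (α : ℂ) * ((s ^ α : ℝ) : ℂ) * z * deriv φ (((s ^ α : ℝ) : ℂ) * z)) := by
  have hmem : ∀ s ∈ Icc (0:ℝ) 1, ((s ^ α : ℝ) : ℂ) * z ∈ Metric.ball (0:ℂ) 1 := by
    intro s hs
    simp only [Metric.mem_ball, dist_zero_right] at hz ⊢
    have h1 : s ^ α ≤ 1 := Real.rpow_le_one hs.1 hs.2 hα.le
    have h0 : (0:ℝ) ≤ s ^ α := Real.rpow_nonneg hs.1 α
    calc ‖((s ^ α : ℝ) : ℂ) * z‖ = (s ^ α) * ‖z‖ := by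
          rw [norm_mul, Complex.norm_real, Real.norm_of_nonneg h0]
      _ ≤ 1 * ‖z‖ := by nlinarith [norm_nonneg z]
      _ < 1 := by simpa using hz
  have hrc : ContinuousOn (fun s : ℝ => s ^ α) (Icc 0 1) := fun s _ =>
    (Real.continuousAt_rpow_const s α (Or.inr hα.le)).continuousWithinAt
  have hcc : ContinuousOn (fun s : ℝ => ((s ^ α : ℝ) : ℂ) * z) (Icc 0 1) :=
    (Complex.continuous_ofReal.comp_continuousOn hrc).mul continuousOn_const
  have hφc : ContinuousOn φ (Metric.ball 0 1) := hφ.continuousOn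
  have hφ'c : ContinuousOn (deriv φ) (Metric.ball 0 1) := hφ.deriv.continuousOn
  set u : ℝ → ℂ := fun s => (s : ℂ) * φ (((s ^ α : ℝ) : ℂ) * z) with hu
  have hucont : ContinuousOn u (Icc 0 1) :=
    (Complex.continuous_ofReal.continuousOn).mul (hφc.comp hcc hmem)
  have hderiv : ∀ s ∈ Ioo (0:ℝ) 1, HasDerivAt u
      (φ (((s ^ α : ℝ) : ℂ) * z)
        + (α : ℂ) * ((s ^ α : ℝ) : ℂ) * z * deriv φ (((s ^ α : ℝ) : ℂ) * z)) s := by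
    intro s hs
    set w : ℂ := ((s ^ α : ℝ) : ℂ) * z with hw
    have hwmem : w ∈ Metric.ball (0:ℂ) 1 := hmem s ⟨hs.1.le, hs.2.le⟩
    have hc : HasDerivAt (fun s : ℝ => ((s ^ α : ℝ) : ℂ) * z)
        (((α * s ^ (α - 1) : ℝ) : ℂ) * z) s :=
      ((Real.hasDerivAt_rpow_const (Or.inl hs.1.ne')).ofReal_comp).mul_const z
    have hφd : HasDerivAt φ (deriv φ w) w :=
      ((hφ w hwmem).differentiableAt).hasDerivAt
    have hcomp : HasDerivAt (fun s : ℝ => φ (((s ^ α : ℝ) : ℂ) * z))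
        ((((α * s ^ (α - 1) : ℝ) : ℂ) * z) • deriv φ w) s :=
      hφd.scomp s hc
    have hid : HasDerivAt (fun s : ℝ => (s : ℂ)) ((1:ℝ) : ℂ) s :=
      (hasDerivAt_id s).ofReal_comp
    have := hid.mul hcomp
    have hsum : ((1:ℝ):ℂ) * φ w + (s:ℂ) * ((((α * s ^ (α - 1) : ℝ) : ℂ) * z) • deriv φ w)
        = φ w + (α : ℂ) * ((s ^ α : ℝ) : ℂ) * z * deriv φ w := by
      have hr : s ^ (α - 1) * s = s ^ α := by
        rw [← Real.rpow_add_one hs.1.ne' (α - 1)]; ring_nf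
      rw [smul_eq_mul]
      push_cast [← hr]
      ring
    rw [hsum] at this
    exact this
  have hFcont : ContinuousOn (fun s : ℝ =>
      φ (((s ^ α : ℝ) : ℂ) * z)
        + (α : ℂ) * ((s ^ α : ℝ) : ℂ) * z * deriv φ (((s ^ α : ℝ) : ℂ) * z)) (Icc 0 1) := by
    exact (hφc.comp hcc hmem).add
      (((continuousOn_const.mul (Complex.continuous_ofReal.comp_continuousOn hrc)).mul
        continuousOn_const).mul (hφ'c.comp hcc hmem))
  have hint : IntervalIntegrable (fun s : ℝ =>
      φ (((s ^ α : ℝ) : ℂ) * z)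
        + (α : ℂ) * ((s ^ α : ℝ) : ℂ) * z * deriv φ (((s ^ α : ℝ) : ℂ) * z)) MeasureTheory.volume 0 1 := by
    exact (hFcont.mono (by rw [uIcc_of_le (by norm_num : (0:ℝ) ≤ 1)])).intervalIntegrable
  have := intervalIntegral.integral_eq_sub_of_hasDerivAt_of_le (by norm_num : (0:ℝ) ≤ 1)
    hucont hderiv hint
  rw [this]
  simp [u, Real.one_rpow, Real.zero_rpow hα.ne']

private lemma base_strict (α : ℝ) (hα : 0 < α) (A B : ℂ → ℂ)
    (hA : AnalyticOnNhd ℂ A (Metric.ball 0 1)) (hB : AnalyticOnNhd ℂ B (Metric.ball 0 1))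
    (hf : ∀ w ∈ Metric.ball (0:ℂ) 1,
      ‖B w + (α:ℂ) * w * deriv B w‖ < (A w + (α:ℂ) * w * deriv A w).re)
    (z : ℂ) (hz : z ∈ Metric.ball (0:ℂ) 1) : ‖B z‖ < (A z).re := by
  have hmem : ∀ s ∈ Icc (0:ℝ) 1, ((s ^ α : ℝ) : ℂ) * z ∈ Metric.ball (0:ℂ) 1 := by
    intro s hs
    simp only [Metric.mem_ball, dist_zero_right] at hz ⊢
    have h1 : s ^ α ≤ 1 := Real.rpow_le_one hs.1 hs.2 hα.le
    have h0 : (0:ℝ) ≤ s ^ α := Real.rpow_nonneg hs.1 α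
    calc ‖((s ^ α : ℝ) : ℂ) * z‖ = (s ^ α) * ‖z‖ := by
          rw [norm_mul, Complex.norm_real, Real.norm_of_nonneg h0]
      _ ≤ 1 * ‖z‖ := by nlinarith [norm_nonneg z]
      _ < 1 := by simpa using hz
  have hrc : ContinuousOn (fun s : ℝ => s ^ α) (Icc 0 1) := fun s _ =>
    (Real.continuousAt_rpow_const s α (Or.inr hα.le)).continuousWithinAt
  have hcc : ContinuousOn (fun s : ℝ => ((s ^ α : ℝ) : ℂ) * z) (Icc 0 1) :=
    (Complex.continuous_ofReal.comp_continuousOn hrc).mul continuousOn_const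
  have hFcont : ∀ (φ : ℂ → ℂ), AnalyticOnNhd ℂ φ (Metric.ball 0 1) →
      ContinuousOn (fun s : ℝ =>
        φ (((s ^ α : ℝ) : ℂ) * z)
          + (α : ℂ) * ((s ^ α : ℝ) : ℂ) * z * deriv φ (((s ^ α : ℝ) : ℂ) * z)) (Icc 0 1) := by
    intro φ hφ
    exact (hφ.continuousOn.comp hcc hmem).add
      (((continuousOn_const.mul (Complex.continuous_ofReal.comp_continuousOn hrc)).mul
        continuousOn_const).mul (hφ.deriv.continuousOn.comp hcc hmem))
  have hFint : ∀ (φ : ℂ → ℂ), AnalyticOnNhd ℂ φ (Metric.ball 0 1) →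
      IntervalIntegrable (fun s : ℝ =>
        φ (((s ^ α : ℝ) : ℂ) * z)
          + (α : ℂ) * ((s ^ α : ℝ) : ℂ) * z * deriv φ (((s ^ α : ℝ) : ℂ) * z))
        MeasureTheory.volume 0 1 := fun φ hφ =>
    ((hFcont φ hφ).mono (by rw [uIcc_of_le (by norm_num : (0:ℝ) ≤ 1)])).intervalIntegrable
  set F : ℝ → ℂ := fun s =>
    A (((s ^ α : ℝ) : ℂ) * z) + (α : ℂ) * ((s ^ α : ℝ) : ℂ) * z * deriv A (((s ^ α : ℝ) : ℂ) * z)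
    with hFdef
  set G : ℝ → ℂ := fun s =>
    B (((s ^ α : ℝ) : ℂ) * z) + (α : ℂ) * ((s ^ α : ℝ) : ℂ) * z * deriv B (((s ^ α : ℝ) : ℂ) * z)
    with hGdef
  have hFG : ∀ s ∈ Icc (0:ℝ) 1, ‖G s‖ < (F s).re := by
    intro s hs
    have h2 := hf _ (hmem s hs)
    have e1 : F s = A (((s ^ α : ℝ) : ℂ) * z)
        + (α : ℂ) * (((s ^ α : ℝ) : ℂ) * z) * deriv A (((s ^ α : ℝ) : ℂ) * z) := by
      simp only [hFdef]; ring
    have e2 : G s = B (((s ^ α : ℝ) : ℂ) * z)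
        + (α : ℂ) * (((s ^ α : ℝ) : ℂ) * z) * deriv B (((s ^ α : ℝ) : ℂ) * z) := by
      simp only [hGdef]; ring
    rw [e1, e2]
    exact h2
  have hAz : A z = ∫ s in (0:ℝ)..1, F s := rep_integral α hα A hA z hz
  have hBz : B z = ∫ s in (0:ℝ)..1, G s := rep_integral α hα B hB z hz
  have hFi : IntervalIntegrable F MeasureTheory.volume 0 1 := hFint A hA
  have hGi : IntervalIntegrable G MeasureTheory.volume 0 1 := hFint B hB
  have hre : (A z).re = ∫ s in (0:ℝ)..1, (F s).re := by
    rw [hAz]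
    exact (Complex.reCLM.intervalIntegral_comp_comm hFi).symm
  have habs : ‖B z‖ ≤ ∫ s in (0:ℝ)..1, ‖G s‖ := by
    rw [hBz]
    exact intervalIntegral.norm_integral_le_integral_norm (by norm_num)
  have h01 : uIcc (0:ℝ) 1 ⊆ Icc 0 1 := by rw [uIcc_of_le (by norm_num : (0:ℝ) ≤ 1)]
  have hreint : IntervalIntegrable (fun s => (F s).re) MeasureTheory.volume 0 1 :=
    ((Complex.continuous_re.comp_continuousOn (hFcont A hA)).mono h01).intervalIntegrable
  have habsint : IntervalIntegrable (fun s => ‖G s‖) MeasureTheory.volume 0 1 :=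
    ((continuous_norm.comp_continuousOn (hFcont B hB)).mono h01).intervalIntegrable
  have hpos : 0 < ∫ s in (0:ℝ)..1, ((F s).re - ‖G s‖) := by
    apply intervalIntegral.intervalIntegral_pos_of_pos_on (hreint.sub habsint)
    · intro s hs
      exact sub_pos.mpr (hFG s ⟨hs.1.le, hs.2.le⟩)
    · norm_num
  rw [intervalIntegral.integral_sub hreint habsint] at hpos
  calc ‖B z‖ ≤ ∫ s in (0:ℝ)..1, ‖G s‖ := habs
    _ < ∫ s in (0:ℝ)..1, (F s).re := by linarith
    _ = (A z).re := hre.symm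

/-- if 0 ≤ β < α then W⁰_H(α) ⊆ W⁰_H(β). -/
theorem stmt_19 (α β : ℝ) (hβ : 0 ≤ β) (hβα : β < α) (h g : ℂ → ℂ)
    (hh : DifferentiableOn ℂ h (Metric.ball 0 1))
    (hg : DifferentiableOn ℂ g (Metric.ball 0 1))
    (h0 : h 0 = 0) (h1 : deriv h 0 = 1) (g0 : g 0 = 0) (g1 : deriv g 0 = 0)
    (hf : ∀ z ∈ Metric.ball (0 : ℂ) 1,
        ‖deriv g z + (α : ℂ) * z * deriv (deriv g) z‖
          < (deriv h z + (α : ℂ) * z * deriv (deriv h) z).re) :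
    ∀ z ∈ Metric.ball (0 : ℂ) 1,
      ‖deriv g z + (β : ℂ) * z * deriv (deriv g) z‖
        < (deriv h z + (β : ℂ) * z * deriv (deriv h) z).re := by
  intro z hz
  have hα : 0 < α := lt_of_le_of_lt hβ hβα
  have hA : AnalyticOnNhd ℂ (deriv h) (Metric.ball 0 1) :=
    (hh.analyticOnNhd Metric.isOpen_ball).deriv
  have hB : AnalyticOnNhd ℂ (deriv g) (Metric.ball 0 1) :=
    (hg.analyticOnNhd Metric.isOpen_ball).deriv
  have hbase : ‖deriv g z‖ < (deriv h z).re :=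
    base_strict α hα (deriv h) (deriv g) hA hB hf z hz
  set lam : ℝ := β / α with hlam
  have hlam0 : 0 ≤ lam := div_nonneg hβ hα.le
  have hlam1 : lam < 1 := (div_lt_one hα).mpr hβα
  have hβeq : (β : ℂ) = (lam : ℂ) * (α : ℂ) := by
    have hα0 : (α : ℂ) ≠ 0 := by exact_mod_cast hα.ne'
    rw [hlam]; push_cast; field_simp
  have key : ∀ X X' : ℂ, X + (β:ℂ) * z * X'
      = ((1 - lam : ℝ) : ℂ) * X + (lam : ℂ) * (X + (α:ℂ) * z * X') := by
    intro X X'; rw [hβeq]; push_cast; ring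
  rw [key (deriv g z) (deriv (deriv g) z), key (deriv h z) (deriv (deriv h) z)]
  have hG := hf z hz
  calc ‖((1-lam:ℝ):ℂ) * deriv g z
        + (lam:ℂ) * (deriv g z + (α:ℂ)*z*deriv (deriv g) z)‖
      ≤ ‖((1-lam:ℝ):ℂ) * deriv g z‖
        + ‖(lam:ℂ) * (deriv g z + (α:ℂ)*z*deriv (deriv g) z)‖ :=
        norm_add_le _ _
    _ = (1-lam) * ‖deriv g z‖
        + lam * ‖deriv g z + (α:ℂ)*z*deriv (deriv g) z‖ := by
        rw [norm_mul, norm_mul, Complex.norm_real, Complex.norm_real,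
          Real.norm_of_nonneg (by linarith : (0:ℝ) ≤ 1 - lam), Real.norm_of_nonneg hlam0]
    _ < (1-lam) * (deriv h z).re
        + lam * (deriv h z + (α:ℂ)*z*deriv (deriv h) z).re :=
        add_lt_add_of_lt_of_le
          (mul_lt_mul_of_pos_left hbase (by linarith : (0:ℝ) < 1-lam))
          (mul_le_mul_of_nonneg_left hG.le hlam0)
    _ = (((1-lam:ℝ):ℂ) * deriv h z
        + (lam:ℂ) * (deriv h z + (α:ℂ)*z*deriv (deriv h) z)).re := by
        simp [Complex.add_re, Complex.re_ofReal_mul]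
end
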